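/- arXiv:2204.13055 — 4 statements merged into one kernel-verified Lean document; each statement's English description precedes it below -/
import Mathlib

section
/- Let p be a prime and G a finite group with a component L such that the order of Z(L) is coprime to p. Set H = L·C_G(L), F = {E ∈ A_p(G) : E ∩ H = 1}, and F_1 = {B ∈ Outposet_G(L) : O_p(C_G(LB)) ≠ 1}. Define a relation ⊑ on the disjoint union A_p(H) ∪ F as follows: within A_p(H) and within F, ⊑ is proper inclusion; for F ∈ F and A ∈ A_p(H), F ⊑ A iff C_A(F) ≠ 1 and, in case F ∈ F_1, additionally C_A(F) is not contained in L; and A ⊑ F never holds. Then ⊑ is a strict partial order. -/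
attribute [local instance] Classical.propDecidable

noncomputable section

namespace QF

/-! ## Group-theoretic notions -/

/-- `H` is a normal subgroup of `K` (as subgroups of an ambient group `G`). -/
def NormalIn {G : Type*} [Group G] (H K : Subgroup G) : Prop :=
  H ≤ K ∧ ∀ k ∈ K, ∀ h ∈ H, k * h * k⁻¹ ∈ H

/-- `L` is a subnormal subgroup of `G`: there is a finite chain of subgroups from `L` to `G`,
each normal in the next. -/
def IsSubnormal {G : Type*} [Group G] (L : Subgroup G) : Prop :=
  ∃ (n : ℕ) (c : ℕ → Subgroup G), c 0 = L ∧ c n = ⊤ ∧ ∀ i < n, NormalIn (c i) (c (i + 1))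

/-- `L` is quasisimple: `L = [L,L]` and `L/Z(L)` is a nonabelian simple group. -/
def IsQuasisimple {G : Type*} [Group G] (L : Subgroup G) : Prop :=
  ⁅L, L⁆ = L ∧ IsSimpleGroup (↥L ⧸ Subgroup.center ↥L) ∧
    ∃ a b : ↥L ⧸ Subgroup.center ↥L, a * b ≠ b * a

/-- A component of a group: a subnormal quasisimple subgroup. -/
def IsComponent {G : Type*} [Group G] (L : Subgroup G) : Prop :=
  IsSubnormal L ∧ IsQuasisimple L

/-- The Fitting subgroup: the subgroup generated by all nilpotent normal subgroups. -/
def fittingSubgroup (G : Type*) [Group G] : Subgroup G :=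
  sSup {N : Subgroup G | N.Normal ∧ Group.IsNilpotent ↥N}

/-- `E(G)`: the subgroup generated by all components of `G`. -/
def layer (G : Type*) [Group G] : Subgroup G :=
  sSup {L : Subgroup G | IsComponent L}

/-- The generalized Fitting subgroup `F*(G) = F(G) ⬝ E(G)`. -/
def genFitting (G : Type*) [Group G] : Subgroup G :=
  fittingSubgroup G ⊔ layer G

/-- `O_p(G) = 1`: every normal `p`-subgroup of `G` is trivial. -/
def OpTrivial (p : ℕ) (G : Type*) [Group G] : Prop :=
  ∀ N : Subgroup G, N.Normal → IsPGroup p ↥N → N = ⊥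

/-- `E` is an elementary abelian `p`-subgroup (possibly trivial). -/
def IsElemAb (p : ℕ) {G : Type*} [Group G] (E : Subgroup G) : Prop :=
  (∀ x ∈ E, ∀ y ∈ E, x * y = y * x) ∧ ∀ x ∈ E, x ^ p = 1

/-- The Quillen poset `A_p(H)` of nontrivial elementary abelian `p`-subgroups of `G`
contained in the subgroup `H`, regarded as a set of subgroups of `G`. -/
def apIn (p : ℕ) {G : Type*} [Group G] (H : Subgroup G) : Set (Subgroup G) :=
  {E | E ≠ ⊥ ∧ IsElemAb p E ∧ E ≤ H}

/-- The `p`-outer poset of `L` in `G`: nontrivial elementary abelian `p`-subgroups `B`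
of `N_G(L)` with `B ∩ (L C_G(L)) = 1`. -/
def outPoset (p : ℕ) {G : Type*} [Group G] (L : Subgroup G) : Set (Subgroup G) :=
  {B | B ≠ ⊥ ∧ IsElemAb p B ∧ B ≤ Subgroup.normalizer (L : Set G) ∧
    B ⊓ (L ⊔ Subgroup.centralizer (L : Set G)) = ⊥}

/-- The `p`-rank of a group: the largest `n` such that `K` contains an elementary abelian
`p`-subgroup of order `p ^ n`. -/
def pRank (p : ℕ) (K : Type*) [Group K] : ℕ :=
  sSup {n : ℕ | ∃ E : Subgroup K, IsElemAb p E ∧ Nat.card ↥E = p ^ n}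

/-- The `p`-local `q`-rank of a group `K`: the maximum of the `q`-ranks of normalizers of
nontrivial `p`-subgroups. -/
def pLocalRank (p q : ℕ) (K : Type*) [Group K] : ℕ :=
  sSup {n : ℕ | ∃ P : Subgroup K, P ≠ ⊥ ∧ IsPGroup p ↥P ∧
    ∃ E : Subgroup K, E ≤ Subgroup.normalizer (P : Set K) ∧ IsElemAb q E ∧ Nat.card ↥E = q ^ n}

/-- A group is `q`-elementary if it is the (internal) direct product of a cyclic group and
a `q`-group. -/
def qElementary (q : ℕ) (G : Type*) [Group G] : Prop :=
  ∃ C R : Subgroup G, IsCyclic ↥C ∧ IsPGroup q ↥R ∧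
    (∀ c ∈ C, ∀ r ∈ R, c * r = r * c) ∧ C ⊓ R = ⊥ ∧ C ⊔ R = ⊤

/-! ## The augmented rational chain complex of a finite poset

We represent a rational simplicial chain of (degree `k - 1`) of a poset `α` as a function
`Finset α → ℚ` supported on the `k`-element chains of `α`. -/

/-- The coefficient of the face `t` in the boundary of the simplex `s`: if `t ⊆ s` with
exactly one element `x` of `s` deleted, this is `(-1) ^ (number of elements of s below x)`. -/
def bdryCoeff {α : Type*} [PartialOrder α] (s t : Finset α) : ℚ :=
  if t ⊆ s ∧ t.card + 1 = s.card then
    ∑ x ∈ s \ t, (-1 : ℚ) ^ (s.filter fun y => y < x).card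
  else 0

/-- The simplicial boundary operator (on functions `Finset α → ℚ`). -/
def bdryFun {α : Type*} [PartialOrder α] (f : Finset α → ℚ) : Finset α → ℚ :=
  fun t => ∑ᶠ s : Finset α, bdryCoeff s t * f s

/-- `f` is a chain of size `k` (i.e. simplicial degree `k - 1`) of the subposet `S` of `α`:
it is supported on totally ordered `k`-element subsets of `S`. -/
def SuppOn {α : Type*} [PartialOrder α] (S : Set α) (k : ℕ) (f : Finset α → ℚ) : Prop :=
  ∀ s, f s ≠ 0 → s.card = k ∧ IsChain (· ≤ ·) (↑s : Set α) ∧ ↑s ⊆ S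

/-- `f` is a cycle of size `k` (degree `k - 1`) of the augmented rational chain complex of
the subposet `S`. -/
def IsCycleOn {α : Type*} [PartialOrder α] (S : Set α) (k : ℕ) (f : Finset α → ℚ) : Prop :=
  SuppOn S k f ∧ bdryFun f = 0

/-- `f` is a boundary of size `k` (degree `k - 1`) in the augmented rational chain complex of
the subposet `S`. -/
def IsBoundaryOn {α : Type*} [PartialOrder α] (S : Set α) (k : ℕ) (f : Finset α → ℚ) : Prop :=
  ∃ g : Finset α → ℚ, SuppOn S (k + 1) g ∧ bdryFun g = f

/-- The reduced rational homology of the subposet `S` is nonzero in degree `k - 1`. -/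
def RHomNZ {α : Type*} [PartialOrder α] (S : Set α) (k : ℕ) : Prop :=
  ∃ f : Finset α → ℚ, IsCycleOn S k f ∧ ¬ IsBoundaryOn S k f

/-- The reduced Euler characteristic of the subposet `S`:
`χ̃(S) = ∑_{n ≥ -1} (-1)^n f_n(S)` where `f_n` is the number of `(n+1)`-element chains. -/
def redEuler {α : Type*} [PartialOrder α] (S : Set α) : ℤ :=
  ∑ᶠ s : Finset α,
    if IsChain (· ≤ ·) (↑s : Set α) ∧ ↑s ⊆ S then (-1 : ℤ) ^ (s.card + 1) else 0

/-! ## Chains in a subcomplex of the order complex -/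

/-- `f` is a chain of size `k` supported on the subcomplex `M` (together with the empty chain,
for the augmentation). -/
def SuppM {α : Type*} [PartialOrder α] (M : Set (Finset α)) (k : ℕ) (f : Finset α → ℚ) : Prop :=
  ∀ s, f s ≠ 0 → s.card = k ∧ (s = ∅ ∨ s ∈ M)

/-- `f` is a cycle of size `k` of the (augmented) chain complex of the subcomplex `M`. -/
def IsCycleM {α : Type*} [PartialOrder α] (M : Set (Finset α)) (k : ℕ) (f : Finset α → ℚ) :
    Prop :=
  SuppM M k f ∧ bdryFun f = 0

/-- `f` is a boundary of size `k` in the (augmented) chain complex of the subcomplex `M`. -/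
def IsBoundaryM {α : Type*} [PartialOrder α] (M : Set (Finset α)) (k : ℕ) (f : Finset α → ℚ) :
    Prop :=
  ∃ g : Finset α → ℚ, SuppM M (k + 1) g ∧ bdryFun g = f

/-! ## Quillen-conjecture properties -/

/-- `G` satisfies (H-QC) at `p`: if `O_p(G) = 1` then `A_p(G)` has nonzero reduced rational
homology in some degree. -/
def HQC (p : ℕ) (G : Type*) [Group G] : Prop :=
  OpTrivial p G → ∃ k : ℕ, RHomNZ (apIn p (⊤ : Subgroup G)) k

/-- `K` has Quillen dimension at `p`: if `O_p(K) = 1` then `A_p(K)` has nonzero reduced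
rational homology in degree `m_p(K) - 1`. -/
def QDp (p : ℕ) (K : Type*) [Group K] : Prop :=
  OpTrivial p K → RHomNZ (apIn p (⊤ : Subgroup K)) (pRank p K)

/-- The fixed-point subposet `A_p(H)^Q` under conjugation by the subgroup `Q`. -/
def apFixed (p : ℕ) {G : Type*} [Group G] (H Q : Subgroup G) : Set (Subgroup G) :=
  {E | E ∈ apIn p H ∧ ∀ x ∈ Q, ∀ g : G, g ∈ E ↔ x * g * x⁻¹ ∈ E}

/-- The fixed-point subposet `A_p(H)^g` under conjugation by the element `g`. -/
def apFixedElt (p : ℕ) {G : Type*} [Group G] (H : Subgroup G) (g : G) : Set (Subgroup G) :=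
  {E | E ∈ apIn p H ∧ ∀ h : G, h ∈ E ↔ g * h * g⁻¹ ∈ E}

/-- Property `R(2)` for a (nonabelian simple) group `L`. -/
def PropertyR2 (L : Type*) [Group L] : Prop :=
  ∃ Q : Subgroup L, qElementary 3 ↥Q ∧ Odd (Nat.card ↥Q) ∧ ¬ OpTrivial 3 ↥Q ∧
    ¬ ((3 : ℤ) ∣ redEuler (apFixed 2 (⊤ : Subgroup L) Q)) ∧
    ∀ E : Subgroup (MulAut L), E ≠ ⊥ → IsElemAb 2 E →
      E ≤ Subgroup.centralizer
        ((Subgroup.map (MulAut.conj : L →* MulAut L) Q : Subgroup (MulAut L)) : Set (MulAut L)) →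
      E ≤ (MulAut.conj : L →* MulAut L).range

/-! ## The pre-join of posets and the initial shuffle product -/

/-- The pre-join of `X` and `Y`: the poset `(C⁻X × C⁻Y) \ {(⊥, ⊥)}`. -/
abbrev PreJoin (X Y : Type*) := {p : WithBot X × WithBot Y // p ≠ (⊥, ⊥)}

/-- The embedding of `X` into the pre-join, `x ↦ (x, ⊥)`. -/
def inX {X Y : Type*} (x : X) : PreJoin X Y :=
  ⟨((x : WithBot X), ⊥), fun h => WithBot.coe_ne_bot (congrArg Prod.fst h)⟩

/-- The embedding of `Y` into the pre-join, `y ↦ (⊥, y)`. -/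
def inY {X Y : Type*} (y : Y) : PreJoin X Y :=
  ⟨(⊥, (y : WithBot Y)), fun h => WithBot.coe_ne_bot (congrArg Prod.snd h)⟩

/-- The element `(x, y)` of the pre-join. -/
def inXY {X Y : Type*} (x : X) (y : Y) : PreJoin X Y :=
  ⟨((x : WithBot X), (y : WithBot Y)), fun h => WithBot.coe_ne_bot (congrArg Prod.fst h)⟩

/-- `c` is a shuffle chain for the pair `(a, b)`: a maximal chain of the grid poset determined
by the `X`-part of `a` and by `b` (with the bottom `(⊥, ⊥)` removed), i.e. a chain of the
pre-join of cardinality `|a_X| + |b|` whose coordinates come from `a` and `b`. -/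
def gridOK {X Y W : Type*} [PartialOrder X] [PartialOrder Y] [PartialOrder W]
    (ιP : PreJoin X Y ↪o W) (a b : Finset W) (c : Finset (PreJoin X Y)) : Prop :=
  IsChain (· ≤ ·) (↑c : Set (PreJoin X Y)) ∧
  c.card = (a.filter fun w => ∃ x : X, w = ιP (inX x)).card + b.card ∧
  ∀ q ∈ c, (q.1.1 = ⊥ ∨ ∃ x : X, q.1.1 = (x : WithBot X) ∧ ιP (inX x) ∈ a) ∧
    (q.1.2 = ⊥ ∨ ∃ y : Y, q.1.2 = (y : WithBot Y) ∧ ιP (inY y) ∈ b)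

/-- The number of inversions of the shuffle chain `c` (the number of cells of the
`a_X × b` rectangle lying below the corresponding lattice path). -/
def invCount {X Y W : Type*} [PartialOrder X] [PartialOrder Y] [PartialOrder W]
    (ιP : PreJoin X Y ↪o W) (a b : Finset W) (c : Finset (PreJoin X Y)) : ℕ :=
  Set.ncard {xy : X × Y | ιP (inX xy.1) ∈ a ∧ ιP (inY xy.2) ∈ b ∧
    ∀ q ∈ c, q.1.1 = (xy.1 : WithBot X) → (xy.2 : WithBot Y) ≤ q.1.2}

/-- The coefficient of the chain `e` of `W` in the initial shuffle product `T(a, b)`. -/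
def Tcoeff {X Y Z W : Type*} [PartialOrder X] [PartialOrder Y] [PartialOrder Z] [PartialOrder W]
    (ιP : PreJoin X Y ↪o W) (ιZ : Z ↪o W) (a b e : Finset W) : ℚ :=
  ∑ᶠ c : Finset (PreJoin X Y),
    if gridOK ιP a b c ∧
        e = c.image (fun q => ιP q) ∪ a.filter (fun w => ∃ z : Z, w = ιZ z) then
      (-1 : ℚ) ^ invCount ιP a b c
    else 0

/-- The initial shuffle product `T_*(f ⊗ g)`, as a function on `Finset W`. -/
def Tmap {X Y Z W : Type*} [PartialOrder X] [PartialOrder Y] [PartialOrder Z] [PartialOrder W]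
    (ιP : PreJoin X Y ↪o W) (ιZ : Z ↪o W) (f g : Finset W → ℚ) : Finset W → ℚ :=
  fun e => ∑ᶠ a : Finset W, ∑ᶠ b : Finset W, f a * g b * Tcoeff ιP ιZ a b e


/-- The order relation `⊑` on `A_p(H) ∪ F`, for `H = L C_G(L)`, with excluded cross-relations
at the conical `p`-outers `F_1`. -/
def sqRel (p : ℕ) {G : Type*} [Group G] (L : Subgroup G) (x y : Subgroup G) : Prop :=
  (x ∈ apIn p (L ⊔ Subgroup.centralizer (L : Set G)) ∧
    y ∈ apIn p (L ⊔ Subgroup.centralizer (L : Set G)) ∧ x < y) ∨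
  ((x ∈ apIn p (⊤ : Subgroup G) ∧ x ⊓ (L ⊔ Subgroup.centralizer (L : Set G)) = ⊥) ∧
    (y ∈ apIn p (⊤ : Subgroup G) ∧ y ⊓ (L ⊔ Subgroup.centralizer (L : Set G)) = ⊥) ∧
    x < y) ∨
  ((x ∈ apIn p (⊤ : Subgroup G) ∧ x ⊓ (L ⊔ Subgroup.centralizer (L : Set G)) = ⊥) ∧
    y ∈ apIn p (L ⊔ Subgroup.centralizer (L : Set G)) ∧
    y ⊓ Subgroup.centralizer (x : Set G) ≠ ⊥ ∧
    ((x ∈ outPoset p L ∧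
        ¬ OpTrivial p ↥(Subgroup.centralizer ((L ⊔ x : Subgroup G) : Set G))) →
      ¬ y ⊓ Subgroup.centralizer (x : Set G) ≤ L))

section AuxLemmas
variable {G : Type*} [Group G]

lemma normalIn_inf {A B L : Subgroup G} (h : NormalIn A B) : NormalIn (A ⊓ L) (B ⊓ L) := by
  refine ⟨inf_le_inf_right L h.1, fun k hk a ha => ?_⟩
  rw [Subgroup.mem_inf] at *
  exact ⟨h.2 k hk.1 a ha.1, L.mul_mem (L.mul_mem hk.2 ha.2) (L.inv_mem hk.2)⟩

lemma normalIn_map (e : G ≃* G) {A B : Subgroup G} (h : NormalIn A B) :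
    NormalIn (A.map e.toMonoidHom) (B.map e.toMonoidHom) := by
  refine ⟨Subgroup.map_mono h.1, fun k hk a ha => ?_⟩
  obtain ⟨k₀, hk₀, rfl⟩ := hk
  obtain ⟨a₀, ha₀, rfl⟩ := ha
  exact ⟨k₀ * a₀ * k₀⁻¹, h.2 k₀ hk₀ a₀ ha₀, by simp [mul_assoc]⟩

lemma chain_le {n : ℕ} {c : ℕ → Subgroup G} (h : ∀ i < n, NormalIn (c i) (c (i + 1))) :
    c 0 ≤ c n := by
  induction n with
  | zero => exact le_rfl
  | succ m ih =>
    exact (ih fun i hi => h i (hi.trans (Nat.lt_succ_self m))).trans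
      (h m (Nat.lt_succ_self m)).1

lemma mem_center_iff_mem_centralizer {L : Subgroup G} (a : ↥L) :
    a ∈ Subgroup.center ↥L ↔ (a : G) ∈ Subgroup.centralizer (L : Set G) := by
  rw [Subgroup.mem_center_iff, Subgroup.mem_centralizer_iff]
  constructor
  · intro h g hg
    simpa [Subtype.ext_iff] using h ⟨g, hg⟩
  · intro h g
    exact Subtype.ext (h g g.2)

open scoped commutatorElement in
lemma central_commutator {M : Type*} [Group M] (a b z z' : M)
    (hz : ∀ w, z * w = w * z) (hz' : ∀ w, z' * w = w * z') :
    ⁅a * z, b * z'⁆ = ⁅a, b⁆ := by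
  have hzc : ∀ w, z * w * z⁻¹ = w := fun w => by rw [hz w, mul_inv_cancel_right]
  have hz'c : ∀ w, z' * w * z'⁻¹ = w := fun w => by rw [hz' w, mul_inv_cancel_right]
  rw [commutatorElement_def, commutatorElement_def]
  have e1 : (a*z) * (b*z') * (a*z)⁻¹ = a * (b*z') * a⁻¹ := by
    rw [mul_inv_rev]
    calc a*z*(b*z')*(z⁻¹*a⁻¹) = a*(z*(b*z')*z⁻¹)*a⁻¹ := by group
    _ = a*(b*z')*a⁻¹ := by rw [hzc (b*z')]
  rw [e1, mul_inv_rev]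
  calc a*(b*z')*a⁻¹*(z'⁻¹*b⁻¹) = a*b*(z'*a⁻¹*z'⁻¹)*b⁻¹ := by group
  _ = a*b*a⁻¹*b⁻¹ := by rw [hz'c a⁻¹]

open scoped commutatorElement in
lemma normalIn_quasisimple {L A : Subgroup G} (hq : IsQuasisimple L) (h : NormalIn A L) :
    A ≤ L ⊓ Subgroup.centralizer (L : Set G) ∨ A = L := by
  have hAL : A ≤ L := h.1
  haveI hsimple : IsSimpleGroup (↥L ⧸ Subgroup.center ↥L) := hq.2.1
  set A' : Subgroup ↥L := A.subgroupOf L with hA'def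
  have hA'norm : A'.Normal :=
    (Subgroup.normal_subgroupOf_iff hAL).mpr fun a l ha hl => h.2 l hl a ha
  set π := QuotientGroup.mk' (Subgroup.center ↥L) with hπ
  have hπsurj : Function.Surjective π := QuotientGroup.mk'_surjective _
  have hAbar : (A'.map π).Normal := hA'norm.map π hπsurj
  rcases hsimple.eq_bot_or_eq_top_of_normal _ hAbar with hbot | htop
  · left
    rw [Subgroup.map_eq_bot_iff, QuotientGroup.ker_mk'] at hbot
    intro a ha
    refine Subgroup.mem_inf.mpr ⟨hAL ha, ?_⟩
    exact (mem_center_iff_mem_centralizer ⟨a, hAL ha⟩).mp (hbot ha)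
  · right
    refine le_antisymm hAL ?_
    have htop' : Subgroup.map L.subtype ⊤ = L := by
      rw [← MonoidHom.range_eq_map, L.range_subtype]
    have hperf : (⁅(⊤ : Subgroup ↥L), (⊤ : Subgroup ↥L)⁆ : Subgroup ↥L) = ⊤ := by
      apply Subgroup.map_injective L.subtype_injective
      rw [Subgroup.map_commutator, htop', hq.1]
    have hcomm : (⁅(⊤ : Subgroup ↥L), (⊤ : Subgroup ↥L)⁆ : Subgroup ↥L) ≤ A' := by
      rw [Subgroup.commutator_le]
      intro g _ k _
      obtain ⟨a, ha, hag⟩ : ∃ a ∈ A', π a = π g := by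
        have : π g ∈ A'.map π := htop ▸ Subgroup.mem_top _
        obtain ⟨a, ha, h'⟩ := this
        exact ⟨a, ha, h'⟩
      obtain ⟨b, hb, hbk⟩ : ∃ b ∈ A', π b = π k := by
        have : π k ∈ A'.map π := htop ▸ Subgroup.mem_top _
        obtain ⟨b, hb, h'⟩ := this
        exact ⟨b, hb, h'⟩
      have hzmem : a⁻¹ * g ∈ Subgroup.center ↥L := by
        rw [← QuotientGroup.ker_mk' (Subgroup.center ↥L)]
        simp [MonoidHom.mem_ker, map_mul, ← hπ, hag]
      have hz'mem : b⁻¹ * k ∈ Subgroup.center ↥L := by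
        rw [← QuotientGroup.ker_mk' (Subgroup.center ↥L)]
        simp [MonoidHom.mem_ker, map_mul, ← hπ, hbk]
      have hg : g = a * (a⁻¹ * g) := by group
      have hk : k = b * (b⁻¹ * k) := by group
      have key : ⁅g, k⁆ = ⁅a, b⁆ := by
        conv_lhs => rw [hg, hk]
        exact central_commutator a b _ _
          (fun w => ((Subgroup.mem_center_iff.mp hzmem) w).symm)
          (fun w => ((Subgroup.mem_center_iff.mp hz'mem) w).symm)
      rw [key, commutatorElement_def]
      exact A'.mul_mem (A'.mul_mem (A'.mul_mem ha hb) (A'.inv_mem ha)) (A'.inv_mem hb)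
    exact Subgroup.subgroupOf_eq_top.mp (top_unique (hperf ▸ hcomm))

lemma subnormal_quasisimple {L : Subgroup G} (hq : IsQuasisimple L) :
    ∀ (n : ℕ) (c : ℕ → Subgroup G), c n = L → (∀ i < n, NormalIn (c i) (c (i + 1))) →
      c 0 ≤ L ⊓ Subgroup.centralizer (L : Set G) ∨ c 0 = L := by
  intro n
  induction n with
  | zero => intro c h _; exact Or.inr h
  | succ m ih =>
    intro c hend hsteps
    have hlast : NormalIn (c m) L := hend ▸ hsteps m (Nat.lt_succ_self m)
    rcases normalIn_quasisimple hq hlast with hle | heq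
    · exact Or.inl ((chain_le fun i hi => hsteps i (hi.trans (Nat.lt_succ_self m))).trans hle)
    · exact ih c heq fun i hi => hsteps i (hi.trans (Nat.lt_succ_self m))


lemma conj_mem_normalizer {p : ℕ} (hp : p.Prime) [Finite G]
    {L : Subgroup G} (hq : IsQuasisimple L) (hsub : IsSubnormal L)
    (hZ : Nat.Coprime (Nat.card ↥(L ⊓ Subgroup.centralizer (L : Set G))) p)
    {w : G} (hwL : w ∈ L) (hwp : w ^ p = 1) (hw1 : w ≠ 1)
    {u : G} (hu : u * w = w * u) : u ∈ Subgroup.normalizer (L : Set G) := by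
  have hworder : orderOf w = p := by
    rcases Nat.Prime.eq_one_or_self_of_dvd hp _ (orderOf_dvd_of_pow_eq_one hwp) with h | h
    · exact absurd (orderOf_eq_one_iff.mp h) hw1
    · exact h
  have hwZ : w ∉ L ⊓ Subgroup.centralizer (L : Set G) := by
    intro hw
    have hdvd : orderOf (⟨w, hw⟩ : ↥(L ⊓ Subgroup.centralizer (L : Set G))) ∣
        Nat.card ↥(L ⊓ Subgroup.centralizer (L : Set G)) := orderOf_dvd_natCard _
    rw [Subgroup.orderOf_mk, hworder] at hdvd
    have : p ∣ 1 := hZ ▸ Nat.dvd_gcd hdvd dvd_rfl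
    have := Nat.le_of_dvd one_pos this
    have := hp.two_le
    omega
  set e := MulAut.conj u with he
  obtain ⟨n, c, hc0, hcn, hsteps⟩ := hsub
  set c' : ℕ → Subgroup G := fun i => (c i).map e.toMonoidHom ⊓ L with hc'
  have hc'0 : c' 0 = L.map e.toMonoidHom ⊓ L := by rw [hc']; simp [hc0]
  have hc'n : c' n = L := by
    rw [hc']; simp only [hcn]
    rw [Subgroup.map_top_of_surjective _ e.surjective, top_inf_eq]
  have hsteps' : ∀ i < n, NormalIn (c' i) (c' (i + 1)) :=
    fun i hi => normalIn_inf (normalIn_map e (hsteps i hi))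
  have hwmem : w ∈ L.map e.toMonoidHom ⊓ L := by
    refine Subgroup.mem_inf.mpr ⟨⟨w, hwL, ?_⟩, hwL⟩
    show u * w * u⁻¹ = w
    rw [hu, mul_inv_cancel_right]
  rcases subnormal_quasisimple hq n c' hc'n hsteps' with hle | heq
  · exact absurd (hle (hc'0 ▸ hwmem)) hwZ
  · have hLle : L ≤ L.map e.toMonoidHom := fun l hl =>
      (Subgroup.mem_inf.mp (hc'0 ▸ heq.symm ▸ hl)).1
    have hcard : Nat.card ↥(L.map e.toMonoidHom) ≤ Nat.card ↥L :=
      (Nat.card_congr (Subgroup.equivMapOfInjective L _ e.injective).toEquiv).ge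
    have heqL : L = L.map e.toMonoidHom := Subgroup.eq_of_le_of_card_ge hLle hcard
    rw [Subgroup.mem_normalizer_iff]
    intro h
    constructor
    · intro hh
      rw [heqL]
      exact ⟨h, hh, rfl⟩
    · intro hh
      rw [heqL] at hh
      obtain ⟨h', hh', hee⟩ := hh
      have : h' = h := by
        have : u * h' * u⁻¹ = u * h * u⁻¹ := hee
        exact mul_left_cancel (mul_right_cancel this)
      exact this ▸ hh'


lemma exists_op {K : Type*} [Group K] [Finite K] {p : ℕ}
    {N : Subgroup K} (hN : N.Normal) (hNp : IsPGroup p ↥N) :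
    ∃ O : Subgroup K, O.Normal ∧ IsPGroup p ↥O ∧ N ≤ O ∧
      ∀ M : Subgroup K, M.Normal → IsPGroup p ↥M → M ≤ O := by
  classical
  set S : Set (Subgroup K) := {M | M.Normal ∧ IsPGroup p ↥M} with hS
  have hfin : S.Finite := Set.toFinite S
  have key : ∀ s : Finset (Subgroup K), (∀ M ∈ s, M.Normal ∧ IsPGroup p ↥M) →
      (s.sup id).Normal ∧ IsPGroup p ↥(s.sup id) := by
    intro s
    induction s using Finset.induction_on with
    | empty =>
      intro _
      simp only [Finset.sup_empty]
      exact ⟨⟨fun n hn g => by rw [Subgroup.mem_bot] at hn ⊢; simp [hn]⟩, IsPGroup.of_bot⟩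
    | @insert a s ha ih =>
      intro hmem
      have hrest := ih fun M hM => hmem M (Finset.mem_insert_of_mem hM)
      have hA := hmem a (Finset.mem_insert_self a s)
      rw [Finset.sup_insert]
      haveI : (id a).Normal := hA.1
      haveI := hrest.1
      exact ⟨Subgroup.sup_normal _ _, IsPGroup.to_sup_of_normal_left hA.2 hrest.2⟩
  refine ⟨hfin.toFinset.sup id, (key _ ?_).1, (key _ ?_).2, ?_, ?_⟩
  · intro M hM; exact (hfin.mem_toFinset.mp hM)
  · intro M hM; exact (hfin.mem_toFinset.mp hM)
  · exact Finset.le_sup (f := id) (hfin.mem_toFinset.mpr ⟨hN, hNp⟩)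
  · intro M hMn hMp
    exact Finset.le_sup (f := id) (hfin.mem_toFinset.mpr ⟨hMn, hMp⟩)

lemma op_transfer {p : ℕ} (hp : p.Prime) [Finite G] {L x y : Subgroup G}
    (hxy : x ≤ y) (hyn : y ≤ Subgroup.normalizer (L : Set G)) (hyE : IsElemAb p y)
    (h1 : ¬ OpTrivial p ↥(Subgroup.centralizer ((L ⊔ x : Subgroup G) : Set G))) :
    ¬ OpTrivial p ↥(Subgroup.centralizer ((L ⊔ y : Subgroup G) : Set G)) := by
  haveI := Fact.mk hp
  set C1 := Subgroup.centralizer ((L ⊔ x : Subgroup G) : Set G) with hC1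
  set C2 := Subgroup.centralizer ((L ⊔ y : Subgroup G) : Set G) with hC2
  have hC21 : C2 ≤ C1 :=
    Subgroup.centralizer_le (SetLike.coe_subset_coe.mpr (sup_le_sup_left hxy L))
  unfold OpTrivial at h1
  push_neg at h1
  obtain ⟨N, hNn, hNp, hNne⟩ := h1
  obtain ⟨O, hOn, hOp, hNO, hOmax⟩ := exists_op hNn hNp
  have hOne : O ≠ ⊥ := fun h => hNne (le_bot_iff.mp (h ▸ hNO))
  set Qa := O.map C1.subtype with hQadef
  have hQa_le : Qa ≤ C1 := Subgroup.map_subtype_le _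
  have hQap : IsPGroup p ↥Qa := hOp.map _
  have hQane : Qa ≠ ⊥ := by
    rw [Ne, Subgroup.map_eq_bot_iff_of_injective _ C1.subtype_injective]
    exact hOne
  have hQaC1 : ∀ c ∈ C1, ∀ q ∈ Qa, c * q * c⁻¹ ∈ Qa := by
    rintro c hc q ⟨q₀, hq₀, rfl⟩
    exact ⟨⟨c, hc⟩ * q₀ * ⟨c, hc⟩⁻¹, hOn.conj_mem q₀ hq₀ ⟨c, hc⟩, rfl⟩
  have hyLx : ∀ u ∈ y, ∀ g ∈ (L ⊔ x : Subgroup G), u⁻¹ * g * u ∈ (L ⊔ x : Subgroup G) := by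
    intro u hu g hg
    have hcomap : (L ⊔ x : Subgroup G) ≤
        (L ⊔ x : Subgroup G).comap (MulAut.conj u⁻¹).toMonoidHom := by
      refine sup_le ?_ ?_
      · intro l hl
        rw [Subgroup.mem_comap]
        exact Subgroup.mem_sup_left
          ((Subgroup.mem_normalizer_iff.mp (hyn (y.inv_mem hu)) l).mp hl)
      · intro ξ hξ
        rw [Subgroup.mem_comap]
        have hcom : u * ξ = ξ * u := hyE.1 u hu ξ (hxy hξ)
        have heq : u⁻¹ * ξ * u⁻¹⁻¹ = ξ := by
          rw [inv_inv]
          calc u⁻¹ * ξ * u = u⁻¹ * (ξ * u) := by rw [mul_assoc]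
          _ = u⁻¹ * (u * ξ) := by rw [← hcom]
          _ = ξ := by group
        show (MulAut.conj u⁻¹).toMonoidHom ξ ∈ (L ⊔ x : Subgroup G)
        have : (MulAut.conj u⁻¹).toMonoidHom ξ = ξ := heq
        rw [this]
        exact Subgroup.mem_sup_right hξ
    have := hcomap hg
    rw [Subgroup.mem_comap] at this
    simpa [MulAut.conj_apply, inv_inv] using this
  have huC1 : ∀ u ∈ y, ∀ c ∈ C1, u * c * u⁻¹ ∈ C1 := by
    intro u hu c hc
    rw [hC1, Subgroup.mem_centralizer_iff]
    intro g hg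
    have h2 : (u⁻¹ * g * u) * c = c * (u⁻¹ * g * u) :=
      Subgroup.mem_centralizer_iff.mp hc _ (hyLx u hu g hg)
    calc g * (u * c * u⁻¹) = u * ((u⁻¹ * g * u) * c) * u⁻¹ := by group
    _ = u * (c * (u⁻¹ * g * u)) * u⁻¹ := by rw [h2]
    _ = u * c * u⁻¹ * g := by group
  have hyQa : ∀ u ∈ y, ∀ q ∈ Qa, u * q * u⁻¹ ∈ Qa := by
    intro u hu q hq
    set Qu := Qa.map (MulAut.conj u).toMonoidHom with hQudef
    have hQu_le : Qu ≤ C1 := by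
      rintro _ ⟨r, hr, rfl⟩
      exact huC1 u hu r (hQa_le hr)
    have hQuC1 : ∀ c ∈ C1, ∀ r ∈ Qu, c * r * c⁻¹ ∈ Qu := by
      rintro c hc _ ⟨r, hr, rfl⟩
      have hc' : u⁻¹ * c * u ∈ C1 := by
        have := huC1 u⁻¹ (y.inv_mem hu) c hc
        simpa [inv_inv] using this
      refine ⟨(u⁻¹ * c * u) * r * (u⁻¹ * c * u)⁻¹, hQaC1 _ hc' r hr, ?_⟩
      show u * ((u⁻¹ * c * u) * r * (u⁻¹ * c * u)⁻¹) * u⁻¹ = c * (u * r * u⁻¹) * c⁻¹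
      group
    have hQu'n : (Qu.subgroupOf C1).Normal :=
      (Subgroup.normal_subgroupOf_iff hQu_le).mpr fun h k hh hk => hQuC1 k hk h hh
    have hQu'p : IsPGroup p ↥(Qu.subgroupOf C1) := IsPGroup.comap_subtype (hQap.map _)
    have hle : Qu.subgroupOf C1 ≤ O := hOmax _ hQu'n hQu'p
    have hmemQu : u * q * u⁻¹ ∈ Qu := ⟨q, hq, rfl⟩
    have hmemC1 : u * q * u⁻¹ ∈ C1 := hQu_le hmemQu
    have : (⟨u * q * u⁻¹, hmemC1⟩ : ↥C1) ∈ Qu.subgroupOf C1 := hmemQu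
    exact ⟨_, hle this, rfl⟩
  have hynorm : y ≤ Subgroup.normalizer (Qa : Set G) := by
    intro u hu
    rw [Subgroup.mem_normalizer_iff]
    intro h
    constructor
    · exact fun hh => hyQa u hu h hh
    · intro hh
      have := hyQa u⁻¹ (y.inv_mem hu) _ hh
      have e : u⁻¹ * (u * h * u⁻¹) * u⁻¹⁻¹ = h := by group
      rwa [e] at this
  have hyp : IsPGroup p ↥y := by
    intro g
    refine ⟨1, ?_⟩
    rw [pow_one]
    exact Subtype.ext (by rw [SubgroupClass.coe_pow]; exact hyE.2 g g.2)
  set P := y ⊔ Qa with hPdef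
  have hPp : IsPGroup p ↥P := IsPGroup.to_sup_of_normal_right' hyp hQap hynorm
  have hPn : P ≤ Subgroup.normalizer (Qa : Set G) := sup_le hynorm Subgroup.le_normalizer
  have hQaP : Qa ≤ P := le_sup_right
  set Q' := Qa.subgroupOf P with hQ'def
  haveI hQ'norm : Q'.Normal :=
    (Subgroup.normal_subgroupOf_iff hQaP).mpr fun h k hh hk =>
      (Subgroup.mem_normalizer_iff.mp (hPn hk) h).mp hh
  letI : MulAction ↥P ↥Q' := MulAction.compHom _ (MulAut.conjNormal (H := Q'))
  have hsmul : ∀ (g : ↥P) (a : ↥Q'), g • a = MulAut.conjNormal g a := fun g a => rfl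
  have hQ'p : IsPGroup p ↥Q' := IsPGroup.comap_subtype hQap
  have hQ'ne : Q' ≠ ⊥ := by
    obtain ⟨a, ha⟩ := Subgroup.ne_bot_iff_exists_ne_one.mp hQane
    refine Subgroup.ne_bot_iff_exists_ne_one.mpr ⟨⟨⟨(a : G), hQaP a.2⟩, a.2⟩, ?_⟩
    intro h
    apply ha
    ext
    exact congrArg (fun t => ((t : ↥P) : G)) (Subtype.ext_iff.mp h)
  have hdvd : p ∣ Nat.card ↥Q' := by
    obtain ⟨n, hn⟩ := (IsPGroup.iff_card (p := p)).mp hQ'p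
    have hgt : 1 < Nat.card ↥Q' := (Subgroup.one_lt_card_iff_ne_bot Q').mpr hQ'ne
    rcases Nat.eq_zero_or_pos n with rfl | hpos
    · rw [hn, pow_zero] at hgt; omega
    · rw [hn]; exact dvd_pow_self p hpos.ne'
  have hmod := hPp.card_modEq_card_fixedPoints ↥Q'
  have hfixdvd : p ∣ Nat.card ↥(MulAction.fixedPoints ↥P ↥Q') :=
    (Nat.modEq_zero_iff_dvd).mp ((hmod.symm).trans (Nat.modEq_zero_iff_dvd.mpr hdvd))
  have h1fix : (1 : ↥Q') ∈ MulAction.fixedPoints ↥P ↥Q' := by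
    intro g
    rw [hsmul]
    exact map_one _
  haveI : Nonempty ↥(MulAction.fixedPoints ↥P ↥Q') := ⟨⟨1, h1fix⟩⟩
  have hfixpos : 0 < Nat.card ↥(MulAction.fixedPoints ↥P ↥Q') := Nat.card_pos
  have hfixgt : 1 < Nat.card ↥(MulAction.fixedPoints ↥P ↥Q') := by
    have := hp.two_le
    rcases hfixdvd with ⟨k, hk⟩
    rcases Nat.eq_zero_or_pos k with rfl | hkpos
    · omega
    · calc 1 < p := by omega
      _ ≤ p * k := Nat.le_mul_of_pos_right p hkpos
      _ = _ := hk.symm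
  haveI : Nontrivial ↥(MulAction.fixedPoints ↥P ↥Q') :=
    Finite.one_lt_card_iff_nontrivial.mp hfixgt
  obtain ⟨q, hqne⟩ := exists_ne (⟨(1 : ↥Q'), h1fix⟩ : ↥(MulAction.fixedPoints ↥P ↥Q'))
  set g₀ : G := ((q.1 : ↥P) : G) with hg₀def
  have hg₀Qa : g₀ ∈ Qa := Subgroup.mem_subgroupOf.mp q.1.2
  have hg₀ne : g₀ ≠ 1 := by
    intro h
    apply hqne
    rw [Subtype.ext_iff, Subtype.ext_iff, Subtype.ext_iff]
    show g₀ = _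
    simpa using h
  have hg₀cent : g₀ ∈ Subgroup.centralizer (y : Set G) := by
    rw [Subgroup.mem_centralizer_iff]
    intro h hh
    have hP : h ∈ P := (le_sup_left : y ≤ P) hh
    have hfix := q.2 ⟨h, hP⟩
    rw [hsmul] at hfix
    have e1 : (⟨h, hP⟩ : ↥P) * (q.1 : ↥P) * (⟨h, hP⟩ : ↥P)⁻¹ = (q.1 : ↥P) := by
      rw [← MulAut.conjNormal_apply, hfix]
    have e2 := Subtype.ext_iff.mp e1
    push_cast at e2
    calc h * g₀ = (h * g₀ * h⁻¹) * h := by group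
    _ = g₀ * h := by rw [hg₀def, e2]
  set D := Qa ⊓ Subgroup.centralizer (y : Set G) with hDdef
  have hg₀D : g₀ ∈ D := ⟨hg₀Qa, hg₀cent⟩
  have hDC2 : D ≤ C2 := by
    intro d hd
    rw [hC2, Subgroup.mem_centralizer_iff]
    intro h hh
    have hsub : (L ⊔ y : Subgroup G) ≤ Subgroup.centralizer {d} := by
      refine sup_le ?_ ?_
      · intro l hl
        rw [Subgroup.mem_centralizer_singleton_iff]
        exact Subgroup.mem_centralizer_iff.mp (hQa_le hd.1) l (Subgroup.mem_sup_left hl)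
      · intro ξ hξ
        rw [Subgroup.mem_centralizer_singleton_iff]
        exact Subgroup.mem_centralizer_iff.mp hd.2 ξ hξ
    exact Subgroup.mem_centralizer_singleton_iff.mp (hsub hh)
  have hDC2conj : ∀ c ∈ C2, ∀ d ∈ D, c * d * c⁻¹ ∈ D := by
    intro c hc d hd
    have hcC1 : c ∈ C1 := hC21 hc
    refine Subgroup.mem_inf.mpr ⟨hQaC1 c hcC1 d hd.1, ?_⟩
    rw [Subgroup.mem_centralizer_iff]
    intro h hh
    have hch : Commute h c := by
      have := Subgroup.mem_centralizer_iff.mp hc h (Subgroup.mem_sup_right hh)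
      exact this
    have hdh : Commute h d := Subgroup.mem_centralizer_iff.mp hd.2 h hh
    exact ((hch.mul_right hdh).mul_right hch.inv_right).eq
  intro hOT
  have hN'n : (D.subgroupOf C2).Normal :=
    (Subgroup.normal_subgroupOf_iff hDC2).mpr fun h k hh hk => hDC2conj k hk h hh
  have hN'p : IsPGroup p ↥(D.subgroupOf C2) :=
    IsPGroup.comap_subtype (hQap.to_le inf_le_left)
  have hbot := hOT _ hN'n hN'p
  have : (⟨g₀, hDC2 hg₀D⟩ : ↥C2) ∈ D.subgroupOf C2 := Subgroup.mem_subgroupOf.mpr hg₀D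
  rw [hbot, Subgroup.mem_bot] at this
  exact hg₀ne (congrArg Subtype.val this)

end AuxLemmas

/-- for a component `L` with `|Z(L)|` coprime to `p`, the relation `⊑` is a
strict partial order. -/
theorem statement8 {p : ℕ} (hp : p.Prime) {G : Type*} [Group G] [Finite G]
    (L : Subgroup G) (hL : IsComponent L)
    (hZ : Nat.Coprime (Nat.card ↥(L ⊓ Subgroup.centralizer (L : Set G))) p) :
    (∀ A, ¬ sqRel p L A A) ∧
    (∀ A A' A'', sqRel p L A A' → sqRel p L A' A'' → sqRel p L A A'') := by
  classical
  have hexcl : ∀ B : Subgroup G,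
      B ∈ apIn p (L ⊔ Subgroup.centralizer (L : Set G)) →
      B ⊓ (L ⊔ Subgroup.centralizer (L : Set G)) = ⊥ → False := by
    intro B hB hFb
    exact hB.1 (by rw [← hFb, inf_eq_left.mpr hB.2.2])
  constructor
  · rintro A (⟨_, _, hlt⟩ | ⟨_, _, hlt⟩ | ⟨⟨hmem, hbot⟩, hAH, _, _⟩)
    · exact lt_irrefl _ hlt
    · exact lt_irrefl _ hlt
    · exact hexcl A hAH hbot
  · rintro A A' A'' h12 h23
    rcases h12 with ⟨hA1, hA'1, hlt1⟩ | ⟨hF1, hF'1, hlt1⟩ | ⟨hF1, hH'1, hne1, himp1⟩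
    · rcases h23 with ⟨_, hA''2, hlt2⟩ | ⟨hF'2, _, _⟩ | ⟨hF'2, _, _, _⟩
      · exact Or.inl ⟨hA1, hA''2, hlt1.trans hlt2⟩
      · exact absurd (hexcl A' hA'1 hF'2.2) id
      · exact absurd (hexcl A' hA'1 hF'2.2) id
    · rcases h23 with ⟨hA'H, _, _⟩ | ⟨_, hF''2, hlt2⟩ | ⟨_, hH''2, hne2, himp2⟩
      · exact absurd (hexcl A' hA'H hF'1.2) id
      · exact Or.inr (Or.inl ⟨hF1, hF''2, hlt1.trans hlt2⟩)
      · -- the hard case: A < A' in F, and A' ⊑ A''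
        have hCle : Subgroup.centralizer ((A' : Subgroup G) : Set G) ≤
            Subgroup.centralizer ((A : Subgroup G) : Set G) :=
          Subgroup.centralizer_le (SetLike.coe_subset_coe.mpr hlt1.le)
        have hWle : A'' ⊓ Subgroup.centralizer ((A' : Subgroup G) : Set G) ≤
            A'' ⊓ Subgroup.centralizer ((A : Subgroup G) : Set G) :=
          inf_le_inf_left _ hCle
        refine Or.inr (Or.inr ⟨hF1, hH''2, ?_, ?_⟩)
        · intro h
          exact hne2 (le_bot_iff.mp (h ▸ hWle))
        · rintro ⟨hout, hop⟩ hle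
          have hWL : A'' ⊓ Subgroup.centralizer ((A' : Subgroup G) : Set G) ≤ L :=
            hWle.trans hle
          obtain ⟨w, hwne⟩ := Subgroup.ne_bot_iff_exists_ne_one.mp hne2
          have hw0 : (w : G) ≠ 1 := fun h => hwne (Subtype.ext h)
          have hwA'' : (w : G) ∈ A'' := w.2.1
          have hwC : (w : G) ∈ Subgroup.centralizer ((A' : Subgroup G) : Set G) := w.2.2
          have hwL : (w : G) ∈ L := hWL w.2
          have hwp : (w : G) ^ p = 1 := hH''2.2.1.2 _ hwA''
          have hyn : A' ≤ Subgroup.normalizer (L : Set G) := fun u hu =>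
            conj_mem_normalizer hp hL.2 hL.1 hZ hwL hwp hw0
              (Subgroup.mem_centralizer_iff.mp hwC u hu)
          have hA'out : A' ∈ outPoset p L := ⟨hF'1.1.1, hF'1.1.2.1, hyn, hF'1.2⟩
          have hop' : ¬ OpTrivial p
              ↥(Subgroup.centralizer ((L ⊔ A' : Subgroup G) : Set G)) :=
            op_transfer hp hlt1.le hyn hF'1.1.2.1 hop
          exact himp2 ⟨hA'out, hop'⟩ hWL
    · rcases h23 with ⟨_, hA''2, hlt2⟩ | ⟨hF'2, _, _⟩ | ⟨hF'2, _, _, _⟩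
      · refine Or.inr (Or.inr ⟨hF1, hA''2, ?_, ?_⟩)
        · intro h
          exact hne1 (le_bot_iff.mp (h ▸ inf_le_inf_right _ hlt2.le))
        · intro hcond hle
          exact himp1 hcond ((inf_le_inf_right _ hlt2.le).trans hle)
      · exact absurd (hexcl A' hH'1 hF'2.2) id
      · exact absurd (hexcl A' hH'1 hF'2.2) id

end QF
end
end

section
/- Let p be a prime, G a group acting on a finite set X, and Q, E ≤ G subgroups such that E is a p-group normalized by Q. Let O ⊆ X be an orbit of Q that is stabilized setwise by E, and suppose that E does not act trivially on O, i.e. there exist e ∈ E and x ∈ O with e·x ≠ x. Then p divides |O|. -/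
attribute [local instance] Classical.propDecidable

noncomputable section

namespace QF

/-- if `E` is a `p`-subgroup normalized by `Q`, and `O` is a `Q`-orbit stabilized
setwise by `E` on which `E` acts nontrivially, then `p` divides `|O|`. -/
theorem statement16 {p : ℕ} (hp : p.Prime) {G X : Type*} [Group G] [MulAction G X]
    [Finite X] (Q E : Subgroup G) (hE : IsPGroup p ↥E)
    (hnorm : ∀ q ∈ Q, ∀ e ∈ E, q * e * q⁻¹ ∈ E)
    (x₀ : X) (O : Set X) (hO : O = {y : X | ∃ g ∈ Q, y = g • x₀})
    (hstab : ∀ e ∈ E, ∀ y ∈ O, e • y ∈ O)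
    (hnontriv : ∃ e ∈ E, ∃ y ∈ O, e • y ≠ y) :
    p ∣ Nat.card ↥O := by
  haveI : Fact p.Prime := ⟨hp⟩
  by_contra hdvd
  letI : SMul ↥E ↥O := ⟨fun e y => ⟨(e : G) • (y : X), hstab e e.2 y y.2⟩⟩
  have smul_def : ∀ (e : ↥E) (y : ↥O), ((e • y : ↥O) : X) = (e : G) • (y : X) :=
    fun _ _ => rfl
  letI : MulAction ↥E ↥O :=
    { one_smul := fun y => by
        apply Subtype.ext; rw [smul_def]; simp
      mul_smul := fun e f y => by
        apply Subtype.ext; rw [smul_def, smul_def, smul_def]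
        simp [mul_smul] }
  obtain ⟨y, hy⟩ := hE.nonempty_fixed_point_of_prime_not_dvd_card ↥O hdvd
  rw [MulAction.mem_fixedPoints] at hy
  -- y is fixed by all of E; transport to every point of O
  obtain ⟨e, heE, z, hzO, hez⟩ := hnontriv
  obtain ⟨g, hgQ, hyg⟩ := (Set.ext_iff.mp hO (y : X)).mp y.2
  obtain ⟨q, hqQ, hzq⟩ := (Set.ext_iff.mp hO z).mp hzO
  apply hez
  have key : ∀ f ∈ E, f • (y : X) = (y : X) := by
    intro f hf
    have := hy ⟨f, hf⟩
    rwa [Subtype.ext_iff, smul_def] at this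
  have hconj : (q * g⁻¹)⁻¹ * e * (q * g⁻¹) ∈ E := by
    have := hnorm _ (Q.mul_mem hgQ (Q.inv_mem hqQ)) e heE
    simpa [mul_assoc] using this
  have hz : z = (q * g⁻¹) • (y : X) := by
    rw [hzq, hyg]; rw [← mul_smul]; group
  rw [hz, ← mul_smul]
  have : e * (q * g⁻¹) = (q * g⁻¹) * ((q * g⁻¹)⁻¹ * e * (q * g⁻¹)) := by group
  rw [this, mul_smul, key _ hconj]

end QF
end
end

section
/- Let p be a prime and X a finite set, and let Q be a subgroup of the symmetric group on X that acts transitively on X. Suppose p does not divide |X|. Then every p-subgroup E of the symmetric group on X that is normalized by Q is trivial. -/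
attribute [local instance] Classical.propDecidable

noncomputable section

namespace QF

/-- if `Q ≤ Sym(X)` is transitive on the finite set `X` and `p ∤ |X|`, then
every `p`-subgroup of `Sym(X)` normalized by `Q` is trivial. -/
theorem statement17 {p : ℕ} (hp : p.Prime) {X : Type*} [Finite X]
    (Q : Subgroup (Equiv.Perm X)) (htrans : ∀ x y : X, ∃ σ ∈ Q, σ x = y)
    (hnd : ¬ p ∣ Nat.card X)
    (E : Subgroup (Equiv.Perm X)) (hE : IsPGroup p ↥E)
    (hnorm : ∀ q ∈ Q, ∀ e ∈ E, q * e * q⁻¹ ∈ E) :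
    E = ⊥ := by
  classical
  haveI : Fact p.Prime := ⟨hp⟩
  have hmod := hE.card_modEq_card_fixedPoints X
  -- fixed points nonempty
  have hne : (MulAction.fixedPoints ↥E X).Nonempty := by
    by_contra h
    rw [Set.not_nonempty_iff_eq_empty] at h
    have : Nat.card (MulAction.fixedPoints ↥E X) = 0 := by
      simp [h]
    rw [this] at hmod
    exact hnd ((Nat.modEq_zero_iff_dvd).mp hmod)
  obtain ⟨x0, hx0⟩ := hne
  -- every point is fixed
  have hall : ∀ y : X, ∀ e : ↥E, (e : Equiv.Perm X) y = y := by
    intro y e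
    obtain ⟨σ, hσQ, hσ⟩ := htrans x0 y
    have hmem : σ⁻¹ * (e : Equiv.Perm X) * σ ∈ E := by
      have := hnorm σ⁻¹ (inv_mem hσQ) (e : Equiv.Perm X) e.2
      simpa using this
    have hfix := hx0 (⟨σ⁻¹ * (e : Equiv.Perm X) * σ, hmem⟩ : ↥E)
    have hfix' : (σ⁻¹ * (e : Equiv.Perm X) * σ) x0 = x0 := hfix
    have : (e : Equiv.Perm X) (σ x0) = σ x0 := by
      have := congrArg σ hfix'
      simpa [Equiv.Perm.mul_apply] using this
    rwa [hσ] at this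
  ext e
  simp only [Subgroup.mem_bot]
  constructor
  · intro he
    apply Equiv.ext
    intro y
    simpa using hall y ⟨e, he⟩
  · rintro rfl
    exact one_mem E


end QF
end
end

section
/- Let X be a finite poset, x ∈ X, and n ≥ 0. Set X_{<x} = {y ∈ X : y < x} and X_{>x} = {y ∈ X : y > x}. Suppose that H̃_m(X_{<x} * X_{>x}) = 0 for all m with −1 ≤ m ≤ n−1, where * denotes the join of posets. Then the inclusion of posets X ∖ {x} ↪ X induces an isomorphism H̃_m(X ∖ {x}) → H̃_m(X) for every m ≤ n−1 and a surjection H̃_n(X ∖ {x}) → H̃_n(X). -/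
attribute [local instance] Classical.propDecidable

noncomputable section

namespace QF

set_option linter.unusedSectionVars false

section Generic
variable {β : Type*} [PartialOrder β] [Fintype β]

lemma bdryFun_eq_sum (f : Finset β → ℚ) (t : Finset β) :
    bdryFun f t = ∑ s : Finset β, bdryCoeff s t * f s :=
  finsum_eq_sum_of_fintype _

lemma bdryCoeff_of_not {s t : Finset β} (h : ¬ (t ⊆ s ∧ t.card + 1 = s.card)) :
    bdryCoeff s t = 0 := if_neg h

lemma bdryCoeff_ne {s t : Finset β} (h : bdryCoeff s t ≠ 0) :
    t ⊆ s ∧ t.card + 1 = s.card := by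
  by_contra hc; exact h (bdryCoeff_of_not hc)

lemma bdryCoeff_insert {t : Finset β} {w : β} (hw : w ∉ t) :
    bdryCoeff (insert w t) t = (-1 : ℚ) ^ (t.filter fun y => y < w).card := by
  rw [bdryCoeff, if_pos ⟨Finset.subset_insert _ _, (Finset.card_insert_of_notMem hw).symm⟩,
    Finset.insert_sdiff_cancel hw, Finset.sum_singleton, Finset.filter_insert,
    if_neg (lt_irrefl w)]

lemma exists_insert_of_cover {s t : Finset β} (hsub : t ⊆ s) (hcard : t.card + 1 = s.card) :
    ∃ w, w ∉ t ∧ s = insert w t := by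
  have h1 : (s \ t).card = 1 := by rw [Finset.card_sdiff_of_subset hsub]; omega
  obtain ⟨w, hw⟩ := Finset.card_eq_one.1 h1
  have hwmem : w ∈ s \ t := hw ▸ Finset.mem_singleton_self w
  refine ⟨w, (Finset.mem_sdiff.1 hwmem).2, ?_⟩
  have := Finset.union_sdiff_of_subset hsub
  rw [hw] at this
  rw [← this, Finset.union_comm, ← Finset.insert_eq]

lemma bdryFun_add (f g : Finset β → ℚ) :
    bdryFun (f + g) = bdryFun f + bdryFun g := by
  funext t
  simp only [Pi.add_apply, bdryFun_eq_sum, mul_add, Finset.sum_add_distrib]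

lemma bdryFun_neg (f : Finset β → ℚ) : bdryFun (-f) = - bdryFun f := by
  funext t
  simp only [Pi.neg_apply, bdryFun_eq_sum, mul_neg, Finset.sum_neg_distrib]

lemma suppOn_bdry {S : Set β} {k : ℕ} {h : Finset β → ℚ} (hh : SuppOn S (k + 1) h) :
    SuppOn S k (bdryFun h) := by
  intro t ht
  rw [bdryFun_eq_sum] at ht
  obtain ⟨s, -, hs⟩ := Finset.exists_ne_zero_of_sum_ne_zero ht
  have h1 : bdryCoeff s t ≠ 0 := fun e => hs (by simp [e])
  have h2 : h s ≠ 0 := fun e => hs (by simp [e])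
  obtain ⟨hsub, hcard⟩ := bdryCoeff_ne h1
  obtain ⟨hc, hch, hS⟩ := hh s h2
  have hsub' : (↑t : Set β) ⊆ ↑s := Finset.coe_subset.2 hsub
  exact ⟨by omega, hch.mono hsub', hsub'.trans hS⟩

lemma bdry_supp_chain {h : Finset β → ℚ} (hh : ∀ s, h s ≠ 0 → IsChain (· ≤ ·) (↑s : Set β))
    {t : Finset β} (ht : ¬ IsChain (· ≤ ·) (↑t : Set β)) : bdryFun h t = 0 := by
  rw [bdryFun_eq_sum]
  refine Finset.sum_eq_zero fun s _ => ?_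
  by_cases h1 : bdryCoeff s t = 0
  · rw [h1, zero_mul]
  by_cases h2 : h s = 0
  · rw [h2, mul_zero]
  exact absurd ((hh s h2).mono (Finset.coe_subset.2 (bdryCoeff_ne h1).1)) ht

lemma key_dd (u s : Finset β) (hs : IsChain (· ≤ ·) (↑s : Set β)) :
    ∑ t : Finset β, bdryCoeff t u * bdryCoeff s t = 0 := by
  by_cases hc : u ⊆ s ∧ u.card + 2 = s.card
  · obtain ⟨husub, hucard⟩ := hc
    have h2 : (s \ u).card = 2 := by rw [Finset.card_sdiff_of_subset husub]; omega
    obtain ⟨w₁, w₂, hne, hsd⟩ := Finset.card_eq_two.1 h2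
    -- wlog w₁ < w₂
    have hmem₁ : w₁ ∈ s ∧ w₁ ∉ u := by
      have : w₁ ∈ s \ u := by rw [hsd]; simp
      exact Finset.mem_sdiff.1 this
    have hmem₂ : w₂ ∈ s ∧ w₂ ∉ u := by
      have : w₂ ∈ s \ u := by rw [hsd]; simp
      exact Finset.mem_sdiff.1 this
    have hcomp : w₁ < w₂ ∨ w₂ < w₁ := by
      rcases hs hmem₁.1 hmem₂.1 hne with h | h
      · exact Or.inl (lt_of_le_of_ne h hne)
      · exact Or.inr (lt_of_le_of_ne h hne.symm)
    have main : ∀ v₁ v₂ : β, v₁ < v₂ → v₁ ∈ s → v₂ ∈ s → v₁ ∉ u → v₂ ∉ u →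
        s \ u = {v₁, v₂} → ∑ t : Finset β, bdryCoeff t u * bdryCoeff s t = 0 := by
      intro v₁ v₂ hlt hv₁s hv₂s hv₁u hv₂u hsd'
      have hne' : v₁ ≠ v₂ := ne_of_lt hlt
      have hs_eq : s = insert v₂ (insert v₁ u) := by
        have h3 := Finset.union_sdiff_of_subset husub
        rw [hsd'] at h3
        rw [← h3]
        ext y
        simp [Finset.mem_union, Finset.mem_insert, or_comm, or_assoc, or_left_comm]
      have hv₂i : v₂ ∉ insert v₁ u := by simp [hne'.symm, hv₂u]
      have hv₁i : v₁ ∉ insert v₂ u := by simp [hne', hv₁u]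
      have hs_eq' : s = insert v₁ (insert v₂ u) := by
        rw [hs_eq, Finset.insert_comm]
      have hnet : insert v₁ u ≠ insert v₂ u := by
        intro h
        exact hv₂u (by
          have : v₂ ∈ insert v₁ u := by rw [h]; simp
          rcases Finset.mem_insert.1 this with h' | h'
          · exact absurd h'.symm hne'
          · exact h')
      have hzero : ∀ t : Finset β, t ≠ insert v₁ u → t ≠ insert v₂ u →
          bdryCoeff t u * bdryCoeff s t = 0 := by
        intro t ht₁ ht₂
        by_cases h1 : bdryCoeff t u = 0
        · rw [h1, zero_mul]
        by_cases h2 : bdryCoeff s t = 0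
        · rw [h2, mul_zero]
        exfalso
        obtain ⟨hut, hutc⟩ := bdryCoeff_ne h1
        obtain ⟨hts, htsc⟩ := bdryCoeff_ne h2
        obtain ⟨w, hwu, hw⟩ := exists_insert_of_cover hut hutc
        have hws : w ∈ s \ u := Finset.mem_sdiff.2 ⟨hts (by rw [hw]; simp), hwu⟩
        rw [hsd'] at hws
        rcases Finset.mem_insert.1 hws with h | h
        · exact ht₁ (by rw [hw, h])
        · exact ht₂ (by rw [hw, Finset.mem_singleton.1 h])
      have hsum : ∑ t : Finset β, bdryCoeff t u * bdryCoeff s t =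
          ∑ t ∈ ({insert v₁ u, insert v₂ u} : Finset (Finset β)),
            bdryCoeff t u * bdryCoeff s t := by
        refine (Finset.sum_subset (Finset.subset_univ _) ?_).symm
        intro t _ ht
        simp only [Finset.mem_insert, Finset.mem_singleton, not_or] at ht
        exact hzero t ht.1 ht.2
      rw [hsum, Finset.sum_pair hnet]
      have e₁ : bdryCoeff (insert v₁ u) u = (-1 : ℚ) ^ (u.filter fun y => y < v₁).card :=
        bdryCoeff_insert hv₁u
      have e₂ : bdryCoeff (insert v₂ u) u = (-1 : ℚ) ^ (u.filter fun y => y < v₂).card :=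
        bdryCoeff_insert hv₂u
      have e₃ : bdryCoeff s (insert v₁ u) =
          (-1 : ℚ) ^ ((insert v₁ u).filter fun y => y < v₂).card := by
        rw [hs_eq]; exact bdryCoeff_insert hv₂i
      have e₄ : bdryCoeff s (insert v₂ u) =
          (-1 : ℚ) ^ ((insert v₂ u).filter fun y => y < v₁).card := by
        rw [hs_eq']; exact bdryCoeff_insert hv₁i
      have f₁ : ((insert v₁ u).filter fun y => y < v₂) =
          insert v₁ (u.filter fun y => y < v₂) := by
        rw [Finset.filter_insert, if_pos hlt]
      have f₂ : ((insert v₂ u).filter fun y => y < v₁) = u.filter fun y => y < v₁ := by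
        rw [Finset.filter_insert, if_neg (asymm hlt)]
      have f₃ : v₁ ∉ u.filter fun y => y < v₂ := fun h => hv₁u (Finset.mem_filter.1 h).1
      rw [e₁, e₂, e₃, e₄, f₁, f₂, Finset.card_insert_of_notMem f₃, pow_succ]
      ring
    rcases hcomp with h | h
    · exact main w₁ w₂ h hmem₁.1 hmem₂.1 hmem₁.2 hmem₂.2 hsd
    · exact main w₂ w₁ h hmem₂.1 hmem₁.1 hmem₂.2 hmem₁.2
        (by rw [hsd]; ext y; simp [or_comm])
  · refine Finset.sum_eq_zero fun t _ => ?_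
    by_cases h1 : bdryCoeff t u = 0
    · rw [h1, zero_mul]
    by_cases h2 : bdryCoeff s t = 0
    · rw [h2, mul_zero]
    exfalso
    obtain ⟨h3, h4⟩ := bdryCoeff_ne h1
    obtain ⟨h5, h6⟩ := bdryCoeff_ne h2
    exact hc ⟨h3.trans h5, by omega⟩

lemma bdry_bdry {h : Finset β → ℚ} (hh : ∀ s, h s ≠ 0 → IsChain (· ≤ ·) (↑s : Set β)) :
    bdryFun (bdryFun h) = 0 := by
  funext u
  rw [bdryFun_eq_sum]
  simp only [bdryFun_eq_sum, Finset.mul_sum]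
  rw [Finset.sum_comm]
  simp only [Pi.zero_apply]
  refine Finset.sum_eq_zero fun s _ => ?_
  by_cases h2 : h s = 0
  · exact Finset.sum_eq_zero fun t _ => by simp [h2]
  calc ∑ t : Finset β, bdryCoeff t u * (bdryCoeff s t * h s)
      = (∑ t : Finset β, bdryCoeff t u * bdryCoeff s t) * h s := by
        rw [Finset.sum_mul]; exact Finset.sum_congr rfl fun t _ => by ring
    _ = 0 := by rw [key_dd u s (hh s h2), zero_mul]

end Generic

section Link

variable {β : Type*} [PartialOrder β] [Fintype β] {γ : Type*} [PartialOrder γ] [Fintype γ]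

/-- `ι : γ → β` realizes `γ` as the link of the point `x`. -/
def IsLink (x : β) (ι : γ → β) : Prop :=
  (∀ j j', ι j ≤ ι j' ↔ j ≤ j') ∧ (∀ j, ι j < x ∨ x < ι j) ∧
    (∀ y, y < x ∨ x < y → ∃ j, ι j = y)

variable {x : β} {ι : γ → β}

lemma IsLink.inj (hL : IsLink x ι) : Function.Injective ι := fun j j' h =>
  le_antisymm ((hL.1 j j').1 h.le) ((hL.1 j' j).1 h.ge)

lemma IsLink.lt_iff (hL : IsLink x ι) (j j' : γ) : ι j < ι j' ↔ j < j' := by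
  rw [lt_iff_le_not_ge, lt_iff_le_not_ge, hL.1, hL.1]

lemma IsLink.ne (hL : IsLink x ι) (j : γ) : ι j ≠ x := by
  rcases hL.2.1 j with h | h
  · exact ne_of_lt h
  · exact (ne_of_lt h).symm

def lkLift (ι : γ → β) (s : Finset β) : Finset γ := Finset.univ.filter fun j => ι j ∈ s

def lkUnlift (x : β) (ι : γ → β) (c : Finset γ) : Finset β := insert x (c.image ι)

lemma mem_lkLift {s : Finset β} {j : γ} : j ∈ lkLift ι s ↔ ι j ∈ s := by
  simp [lkLift]

lemma mem_lkUnlift {c : Finset γ} {y : β} :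
    y ∈ lkUnlift x ι c ↔ y = x ∨ ∃ j ∈ c, ι j = y := by
  simp [lkUnlift]

lemma x_mem_lkUnlift (c : Finset γ) : x ∈ lkUnlift x ι c := Finset.mem_insert_self _ _

lemma lkLift_unlift (hL : IsLink x ι) (c : Finset γ) : lkLift ι (lkUnlift x ι c) = c := by
  ext j
  simp only [mem_lkLift, mem_lkUnlift]
  constructor
  · rintro (h | ⟨j', hj', h⟩)
    · exact absurd h (hL.ne j)
    · rwa [← hL.inj h]
  · intro h
    exact Or.inr ⟨j, h, rfl⟩

lemma lkUnlift_lift (hL : IsLink x ι) {s : Finset β} (hxs : x ∈ s)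
    (hs : IsChain (· ≤ ·) (↑s : Set β)) : lkUnlift x ι (lkLift ι s) = s := by
  ext y
  simp only [mem_lkUnlift, mem_lkLift]
  constructor
  · rintro (rfl | ⟨j, hj, rfl⟩)
    · exact hxs
    · exact hj
  · intro hy
    by_cases hyx : y = x
    · exact Or.inl hyx
    have hcomp : y < x ∨ x < y := by
      rcases hs (Finset.mem_coe.2 hy) (Finset.mem_coe.2 hxs) hyx with h | h
      · exact Or.inl (lt_of_le_of_ne h hyx)
      · exact Or.inr (lt_of_le_of_ne h (Ne.symm hyx))
    obtain ⟨j, rfl⟩ := hL.2.2 y hcomp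
    exact Or.inr ⟨j, hy, rfl⟩

lemma card_lkUnlift (hL : IsLink x ι) (c : Finset γ) :
    (lkUnlift x ι c).card = c.card + 1 := by
  rw [lkUnlift, Finset.card_insert_of_notMem, Finset.card_image_of_injective _ hL.inj]
  simp only [Finset.mem_image, not_exists]
  rintro j hj
  exact hL.ne j hj.2

lemma isChain_lkUnlift (hL : IsLink x ι) {c : Finset γ}
    (hc : IsChain (· ≤ ·) (↑c : Set γ)) :
    IsChain (· ≤ ·) (↑(lkUnlift x ι c) : Set β) := by
  intro a ha b hb hne
  rw [Finset.mem_coe, mem_lkUnlift] at ha hb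
  rcases ha with ha | ⟨j, hj, hja⟩ <;> rcases hb with hb | ⟨j', hj', hjb⟩
  · exact absurd (ha.trans hb.symm) hne
  · rw [ha, ← hjb]
    rcases hL.2.1 j' with h | h
    · exact Or.inr h.le
    · exact Or.inl h.le
  · rw [hb, ← hja]
    rcases hL.2.1 j with h | h
    · exact Or.inl h.le
    · exact Or.inr h.le
  · rw [← hja, ← hjb]
    have hjj : j ≠ j' := fun h => hne (by rw [← hja, ← hjb, h])
    rcases hc (Finset.mem_coe.2 hj) (Finset.mem_coe.2 hj') hjj with h | h
    · exact Or.inl ((hL.1 j j').2 h)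
    · exact Or.inr ((hL.1 j' j).2 h)

lemma isChain_of_lkUnlift (hL : IsLink x ι) {c : Finset γ}
    (hc : IsChain (· ≤ ·) (↑(lkUnlift x ι c) : Set β)) :
    IsChain (· ≤ ·) (↑c : Set γ) := by
  intro j hj j' hj' hne
  have h1 : ι j ∈ lkUnlift x ι c := mem_lkUnlift.2 (Or.inr ⟨j, Finset.mem_coe.1 hj, rfl⟩)
  have h2 : ι j' ∈ lkUnlift x ι c := mem_lkUnlift.2 (Or.inr ⟨j', Finset.mem_coe.1 hj', rfl⟩)
  have hne' : ι j ≠ ι j' := fun h => hne (hL.inj h)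
  rcases hc (Finset.mem_coe.2 h1) (Finset.mem_coe.2 h2) hne' with h | h
  · exact Or.inl ((hL.1 j j').1 h)
  · exact Or.inr ((hL.1 j' j).1 h)

def eps (x : β) (s : Finset β) : ℚ := (-1) ^ (s.filter fun y => y < x).card

lemma eps_sq (s : Finset β) : eps x s * eps x s = 1 := by
  rw [eps, ← pow_add]
  exact Even.neg_one_pow ⟨_, rfl⟩

lemma flip_eq {a b e1 e0 : ℚ} (h : a * e1 = -e0 * b) (h1 : e1 * e1 = 1)
    (h0 : e0 * e0 = 1) : b * e1 = -e0 * a := by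
  linear_combination e0 * e1 * h - e0 * a * h1 - e1 * b * h0

lemma lkLift_insert (hL : IsLink x ι) {t : Finset β} {w : β} (j : γ) (hj : ι j = w) :
    lkLift ι (insert w t) = insert j (lkLift ι t) := by
  ext j'
  simp only [mem_lkLift, Finset.mem_insert, ← hj, hL.inj.eq_iff]

lemma sgn_cover (hL : IsLink x ι) {t : Finset β} (ht : IsChain (· ≤ ·) (↑t : Set β))
    (hxt : x ∈ t) {w : β} (hw : w ∉ t)
    (hchain : IsChain (· ≤ ·) (↑(insert w t) : Set β)) :
    bdryCoeff (insert w t) t * eps x (insert w t)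
      = - eps x t * bdryCoeff (lkLift ι (insert w t)) (lkLift ι t) := by
  have hwx : w ≠ x := fun h => hw (h ▸ hxt)
  have hcomp : w < x ∨ x < w := by
    have h1 : w ∈ (↑(insert w t) : Set β) := by simp
    have h2 : x ∈ (↑(insert w t) : Set β) := by simp [hxt]
    rcases hchain h1 h2 hwx with h | h
    · exact Or.inl (lt_of_le_of_ne h hwx)
    · exact Or.inr (lt_of_le_of_ne h (Ne.symm hwx))
  obtain ⟨jw, hjw⟩ := hL.2.2 w hcomp
  have hjwmem : jw ∉ lkLift ι t := by rw [mem_lkLift, hjw]; exact hw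
  rw [lkLift_insert hL jw hjw, bdryCoeff_insert hw, bdryCoeff_insert hjwmem]
  rcases hcomp with hwlt | hxlt
  · have heps : eps x (insert w t) = - eps x t := by
      rw [eps, eps, Finset.filter_insert, if_pos hwlt,
        Finset.card_insert_of_notMem (fun h => hw (Finset.mem_filter.1 h).1), pow_succ]
      ring
    have hcnt : ((lkLift ι t).filter fun j => j < jw).card
        = (t.filter fun y => y < w).card := by
      have himg : ((lkLift ι t).filter fun j => j < jw).image ι
          = t.filter fun y => y < w := by
        ext y
        simp only [Finset.mem_image, Finset.mem_filter, mem_lkLift]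
        constructor
        · rintro ⟨j, ⟨hjt, hjlt⟩, rfl⟩
          exact ⟨hjt, hjw ▸ (hL.lt_iff j jw).2 hjlt⟩
        · rintro ⟨hyt, hylt⟩
          obtain ⟨j, rfl⟩ := hL.2.2 y (Or.inl (hylt.trans hwlt))
          exact ⟨j, ⟨hyt, (hL.lt_iff j jw).1 (by rw [hjw]; exact hylt)⟩, rfl⟩
      rw [← himg, Finset.card_image_of_injective _ hL.inj]
    rw [hcnt, heps]
    ring
  · have heps : eps x (insert w t) = eps x t := by
      rw [eps, eps, Finset.filter_insert, if_neg (asymm hxlt)]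
    have hcnt : (t.filter fun y => y < w).card
        = ((lkLift ι t).filter fun j => j < jw).card + 1 := by
      have himg : insert x (((lkLift ι t).filter fun j => j < jw).image ι)
          = t.filter fun y => y < w := by
        ext y
        simp only [Finset.mem_insert, Finset.mem_image, Finset.mem_filter, mem_lkLift]
        constructor
        · rintro (rfl | ⟨j, ⟨hjt, hjlt⟩, rfl⟩)
          · exact ⟨hxt, hxlt⟩
          · exact ⟨hjt, hjw ▸ (hL.lt_iff j jw).2 hjlt⟩
        · rintro ⟨hyt, hylt⟩
          by_cases hyx : y = x
          · exact Or.inl hyx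
          refine Or.inr ?_
          have hcy : y < x ∨ x < y := by
            rcases ht (Finset.mem_coe.2 hyt) (Finset.mem_coe.2 hxt) hyx with h | h
            · exact Or.inl (lt_of_le_of_ne h hyx)
            · exact Or.inr (lt_of_le_of_ne h (Ne.symm hyx))
          obtain ⟨j, rfl⟩ := hL.2.2 y hcy
          exact ⟨j, ⟨hyt, (hL.lt_iff j jw).1 (by rw [hjw]; exact hylt)⟩, rfl⟩
      have hxnot : x ∉ ((lkLift ι t).filter fun j => j < jw).image ι := by
        intro h
        obtain ⟨j, -, hj⟩ := Finset.mem_image.1 h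
        exact hL.ne j hj
      rw [← himg, Finset.card_insert_of_notMem hxnot,
        Finset.card_image_of_injective _ hL.inj]
    rw [hcnt, heps, pow_succ]
    ring

lemma lkUnlift_mono {c c' : Finset γ} (h : c ⊆ c') : lkUnlift x ι c ⊆ lkUnlift x ι c' :=
  Finset.insert_subset_insert _ (Finset.image_subset_image h)

lemma sgn_full (hL : IsLink x ι) {s t : Finset β} (hs : IsChain (· ≤ ·) (↑s : Set β))
    (hxs : x ∈ s) (ht : IsChain (· ≤ ·) (↑t : Set β)) (hxt : x ∈ t) :
    bdryCoeff s t * eps x s = - eps x t * bdryCoeff (lkLift ι s) (lkLift ι t) := by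
  by_cases hc : t ⊆ s ∧ t.card + 1 = s.card
  · obtain ⟨w, hw, rfl⟩ := exists_insert_of_cover hc.1 hc.2
    exact sgn_cover hL ht hxt hw hs
  · have h1 : bdryCoeff s t = 0 := bdryCoeff_of_not hc
    have h2 : bdryCoeff (lkLift ι s) (lkLift ι t) = 0 := by
      refine bdryCoeff_of_not fun ⟨hsub, hcard⟩ => hc ⟨?_, ?_⟩
      · have := lkUnlift_mono (x := x) (ι := ι) hsub
        rwa [lkUnlift_lift hL hxt ht, lkUnlift_lift hL hxs hs] at this
      · have e1 : (lkUnlift x ι (lkLift ι t)).card = (lkLift ι t).card + 1 :=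
          card_lkUnlift hL _
        have e2 : (lkUnlift x ι (lkLift ι s)).card = (lkLift ι s).card + 1 :=
          card_lkUnlift hL _
        rw [lkUnlift_lift hL hxt ht] at e1
        rw [lkUnlift_lift hL hxs hs] at e2
        omega
    rw [h1, h2]
    ring

def Umap (x : β) (ι : γ → β) (v : Finset γ → ℚ) : Finset β → ℚ := fun s =>
  if x ∈ s ∧ IsChain (· ≤ ·) (↑s : Set β) then eps x s * v (lkLift ι s) else 0

def Lmap (x : β) (ι : γ → β) (h : Finset β → ℚ) : Finset γ → ℚ := fun c =>
  eps x (lkUnlift x ι c) * h (lkUnlift x ι c)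

end Link
section Main

variable {β : Type*} [PartialOrder β] [Fintype β] {γ : Type*} [PartialOrder γ] [Fintype γ]
variable {x : β} {ι : γ → β}

lemma star (hL : IsLink x ι) (v : Finset γ → ℚ)
    (hv : ∀ c, v c ≠ 0 → IsChain (· ≤ ·) (↑c : Set γ))
    {s : Finset β} (hxs : x ∈ s) (hs : IsChain (· ≤ ·) (↑s : Set β)) :
    bdryFun (Umap x ι v) s = - Umap x ι (bdryFun v) s := by
  have hrhs : - Umap x ι (bdryFun v) s
      = ∑ c : Finset γ, -(eps x s * (bdryCoeff c (lkLift ι s) * v c)) := by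
    simp only [Umap]
    rw [if_pos ⟨hxs, hs⟩, bdryFun_eq_sum, Finset.mul_sum, ← Finset.sum_neg_distrib]
  rw [bdryFun_eq_sum, hrhs]
  have hterm : ∀ s' : Finset β, bdryCoeff s' s * Umap x ι v s' =
      if x ∈ s' ∧ IsChain (· ≤ ·) (↑s' : Set β) then
        -(eps x s * (bdryCoeff (lkLift ι s') (lkLift ι s) * v (lkLift ι s'))) else 0 := by
    intro s'
    simp only [Umap]
    by_cases hc : x ∈ s' ∧ IsChain (· ≤ ·) (↑s' : Set β)
    · rw [if_pos hc, if_pos hc]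
      have hM := sgn_full hL hc.2 hc.1 hs hxs
      calc bdryCoeff s' s * (eps x s' * v (lkLift ι s'))
          = (bdryCoeff s' s * eps x s') * v (lkLift ι s') := by ring
        _ = (- eps x s * bdryCoeff (lkLift ι s') (lkLift ι s)) * v (lkLift ι s') := by
            rw [hM]
        _ = -(eps x s * (bdryCoeff (lkLift ι s') (lkLift ι s) * v (lkLift ι s'))) := by ring
    · rw [if_neg hc, if_neg hc, mul_zero]
  calc (∑ s' : Finset β, bdryCoeff s' s * Umap x ι v s')
      = ∑ s' ∈ Finset.univ.filter
            (fun s' : Finset β => x ∈ s' ∧ IsChain (· ≤ ·) (↑s' : Set β)),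
          -(eps x s * (bdryCoeff (lkLift ι s') (lkLift ι s) * v (lkLift ι s'))) := by
        rw [Finset.sum_filter]
        exact Finset.sum_congr rfl fun s' _ => hterm s'
    _ = ∑ c ∈ Finset.univ.filter (fun c : Finset γ => IsChain (· ≤ ·) (↑c : Set γ)),
          -(eps x s * (bdryCoeff c (lkLift ι s) * v c)) := by
        refine Finset.sum_nbij' (lkLift ι) (lkUnlift x ι) ?_ ?_ ?_ ?_ ?_
        · intro a ha
          simp only [Finset.mem_filter, Finset.mem_univ, true_and] at ha ⊢
          exact isChain_of_lkUnlift hL (by rw [lkUnlift_lift hL ha.1 ha.2]; exact ha.2)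
        · intro c hc
          simp only [Finset.mem_filter, Finset.mem_univ, true_and] at hc ⊢
          exact ⟨x_mem_lkUnlift c, isChain_lkUnlift hL hc⟩
        · intro a ha
          simp only [Finset.mem_filter, Finset.mem_univ, true_and] at ha
          exact lkUnlift_lift hL ha.1 ha.2
        · intro c _
          exact lkLift_unlift hL c
        · intro a _
          rfl
    _ = ∑ c : Finset γ, -(eps x s * (bdryCoeff c (lkLift ι s) * v c)) := by
        refine Finset.sum_filter_of_ne fun c _ hne => ?_
        by_contra hcc
        refine hne ?_
        have hvz : v c = 0 := by
          by_contra h'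
          exact hcc (hv c h')
        rw [hvz, mul_zero, mul_zero, neg_zero]

lemma starstar (hL : IsLink x ι) (h : Finset β → ℚ)
    (hh : ∀ s, h s ≠ 0 → IsChain (· ≤ ·) (↑s : Set β) ∧ x ∈ s)
    {c : Finset γ} (hc : IsChain (· ≤ ·) (↑c : Set γ)) :
    bdryFun (Lmap x ι h) c = - Lmap x ι (bdryFun h) c := by
  have hcu : IsChain (· ≤ ·) (↑(lkUnlift x ι c) : Set β) := isChain_lkUnlift hL hc
  have hrhs : - Lmap x ι (bdryFun h) c
      = ∑ s : Finset β, -(eps x (lkUnlift x ι c) * (bdryCoeff s (lkUnlift x ι c) * h s)) := by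
    simp only [Lmap]
    rw [bdryFun_eq_sum, Finset.mul_sum, ← Finset.sum_neg_distrib]
  rw [bdryFun_eq_sum, hrhs]
  have hterm : ∀ c' : Finset γ, bdryCoeff c' c * Lmap x ι h c' =
      -(eps x (lkUnlift x ι c) *
        (bdryCoeff (lkUnlift x ι c') (lkUnlift x ι c) * h (lkUnlift x ι c'))) := by
    intro c'
    simp only [Lmap]
    by_cases hz : h (lkUnlift x ι c') = 0
    · rw [hz, mul_zero, mul_zero, mul_zero, mul_zero, neg_zero]
    obtain ⟨hch', hx'⟩ := hh _ hz
    have hM := sgn_full hL hch' hx' hcu (x_mem_lkUnlift c)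
    rw [lkLift_unlift hL c', lkLift_unlift hL c] at hM
    have hflip := flip_eq hM (eps_sq _) (eps_sq _)
    calc bdryCoeff c' c * (eps x (lkUnlift x ι c') * h (lkUnlift x ι c'))
        = (bdryCoeff c' c * eps x (lkUnlift x ι c')) * h (lkUnlift x ι c') := by ring
      _ = (- eps x (lkUnlift x ι c) * bdryCoeff (lkUnlift x ι c') (lkUnlift x ι c))
            * h (lkUnlift x ι c') := by rw [hflip]
      _ = _ := by ring
  calc (∑ c' : Finset γ, bdryCoeff c' c * Lmap x ι h c')
      = ∑ c' : Finset γ, -(eps x (lkUnlift x ι c) *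
          (bdryCoeff (lkUnlift x ι c') (lkUnlift x ι c) * h (lkUnlift x ι c'))) :=
        Finset.sum_congr rfl fun c' _ => hterm c'
    _ = ∑ c' ∈ Finset.univ.filter
          (fun c' : Finset γ => IsChain (· ≤ ·) (↑(lkUnlift x ι c') : Set β)),
          -(eps x (lkUnlift x ι c) *
            (bdryCoeff (lkUnlift x ι c') (lkUnlift x ι c) * h (lkUnlift x ι c'))) := by
        refine (Finset.sum_filter_of_ne fun c' _ hne => ?_)|>.symm
        by_contra hcc
        refine hne ?_
        have hz : h (lkUnlift x ι c') = 0 := by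
          by_contra h'
          exact hcc (hh _ h').1
        rw [hz, mul_zero, mul_zero, neg_zero]
    _ = ∑ s ∈ Finset.univ.filter
          (fun s : Finset β => x ∈ s ∧ IsChain (· ≤ ·) (↑s : Set β)),
          -(eps x (lkUnlift x ι c) * (bdryCoeff s (lkUnlift x ι c) * h s)) := by
        refine Finset.sum_nbij' (lkUnlift x ι) (lkLift ι) ?_ ?_ ?_ ?_ ?_
        · intro a ha
          simp only [Finset.mem_filter, Finset.mem_univ, true_and] at ha ⊢
          exact ⟨x_mem_lkUnlift a, ha⟩
        · intro s hs
          simp only [Finset.mem_filter, Finset.mem_univ, true_and] at hs ⊢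
          rw [lkUnlift_lift hL hs.1 hs.2]
          exact hs.2
        · intro a _
          exact lkLift_unlift hL a
        · intro s hs
          simp only [Finset.mem_filter, Finset.mem_univ, true_and] at hs
          exact lkUnlift_lift hL hs.1 hs.2
        · intro a _
          rfl
    _ = ∑ s : Finset β,
          -(eps x (lkUnlift x ι c) * (bdryCoeff s (lkUnlift x ι c) * h s)) := by
        refine Finset.sum_filter_of_ne fun s _ hne => ?_
        by_contra hcc
        refine hne ?_
        have hz : h s = 0 := by
          by_contra h'
          exact hcc ⟨(hh s h').2, (hh s h').1⟩
        rw [hz, mul_zero, mul_zero, neg_zero]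

lemma supp_Umap (hL : IsLink x ι) {m : ℕ} {v : Finset γ → ℚ}
    (hv : SuppOn Set.univ m v) : SuppOn Set.univ (m + 1) (Umap x ι v) := by
  intro s hs
  simp only [Umap] at hs
  by_cases hc : x ∈ s ∧ IsChain (· ≤ ·) (↑s : Set β)
  · rw [if_pos hc] at hs
    have hvne : v (lkLift ι s) ≠ 0 := fun h => hs (by rw [h, mul_zero])
    have hcard := (hv _ hvne).1
    have hc2 : (lkUnlift x ι (lkLift ι s)).card = (lkLift ι s).card + 1 := card_lkUnlift hL _
    rw [lkUnlift_lift hL hc.1 hc.2] at hc2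
    exact ⟨by omega, hc.2, Set.subset_univ _⟩
  · rw [if_neg hc] at hs
    exact absurd rfl hs

lemma supp_Lmap (hL : IsLink x ι) {m : ℕ} {h : Finset β → ℚ}
    (hh : ∀ s, h s ≠ 0 → s.card = m + 1 ∧ IsChain (· ≤ ·) (↑s : Set β) ∧ x ∈ s) :
    SuppOn Set.univ m (Lmap x ι h) := by
  intro c hc
  simp only [Lmap] at hc
  have hne : h (lkUnlift x ι c) ≠ 0 := fun e => hc (by rw [e, mul_zero])
  obtain ⟨hcard, hch, -⟩ := hh _ hne
  have h3 := card_lkUnlift hL (x := x) (ι := ι) c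
  exact ⟨by omega, isChain_of_lkUnlift hL hch, Set.subset_univ _⟩

lemma core (hL : IsLink x ι) (k : ℕ) (g : Finset β → ℚ) (hg : SuppOn Set.univ (k + 1) g)
    (hbx : ∀ t : Finset β, x ∈ t → bdryFun g t = 0)
    (hjk : ∀ u : Finset γ → ℚ, IsCycleOn Set.univ k u → IsBoundaryOn Set.univ k u) :
    ∃ w : Finset β → ℚ, SuppOn Set.univ (k + 2) w ∧
      ∀ s : Finset β, x ∈ s → IsChain (· ≤ ·) (↑s : Set β) → bdryFun w s = - g s := by
  set g₁ : Finset β → ℚ :=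
    fun s => if x ∈ s ∧ IsChain (· ≤ ·) (↑s : Set β) then g s else 0 with hg₁def
  have h1 : ∀ s, g₁ s ≠ 0 → s.card = k + 1 ∧ IsChain (· ≤ ·) (↑s : Set β) ∧ x ∈ s := by
    intro s hs
    simp only [hg₁def] at hs
    by_cases hcnd : x ∈ s ∧ IsChain (· ≤ ·) (↑s : Set β)
    · rw [if_pos hcnd] at hs
      exact ⟨(hg s hs).1, hcnd.2, hcnd.1⟩
    · rw [if_neg hcnd] at hs
      exact absurd rfl hs
  have h2 : ∀ t : Finset β, x ∈ t → bdryFun g₁ t = 0 := by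
    intro t hxt
    have he : bdryFun g₁ t = bdryFun g t := by
      rw [bdryFun_eq_sum, bdryFun_eq_sum]
      refine Finset.sum_congr rfl fun s _ => ?_
      by_cases hb : bdryCoeff s t = 0
      · rw [hb, zero_mul, zero_mul]
      have hxs : x ∈ s := (bdryCoeff_ne hb).1 hxt
      by_cases hch : IsChain (· ≤ ·) (↑s : Set β)
      · simp only [hg₁def, if_pos (⟨hxs, hch⟩ : _ ∧ _)]
      · have hgs : g s = 0 := by
          by_contra h'
          exact hch (hg s h').2.1
        simp only [hg₁def, if_neg (fun hcc : _ ∧ _ => hch hcc.2), hgs]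
    rw [he, hbx t hxt]
  have hu : IsCycleOn Set.univ k (Lmap x ι g₁) := by
    refine ⟨supp_Lmap hL h1, ?_⟩
    funext c
    by_cases hcc : IsChain (· ≤ ·) (↑c : Set γ)
    · rw [starstar hL g₁ (fun s hs => ⟨(h1 s hs).2.1, (h1 s hs).2.2⟩) hcc]
      simp only [Lmap, Pi.zero_apply]
      rw [h2 _ (x_mem_lkUnlift c), mul_zero, neg_zero]
    · rw [bdry_supp_chain (fun c' h' => (supp_Lmap hL h1 c' h').2.1) hcc]
      rfl
  obtain ⟨v, hvs, hvb⟩ := hjk (Lmap x ι g₁) hu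
  refine ⟨Umap x ι v, supp_Umap hL hvs, ?_⟩
  intro s hxs hs
  rw [star hL v (fun c hc => (hvs c hc).2.1) hxs hs, hvb]
  simp only [Umap, Lmap, if_pos (⟨hxs, hs⟩ : _ ∧ _)]
  rw [lkUnlift_lift hL hxs hs, ← mul_assoc, eps_sq, one_mul]
  simp only [hg₁def, if_pos (⟨hxs, hs⟩ : _ ∧ _)]

lemma partB (hL : IsLink x ι) {k : ℕ}
    (hjk : ∀ u : Finset γ → ℚ, IsCycleOn Set.univ k u → IsBoundaryOn Set.univ k u)
    (f : Finset β → ℚ) (hf : IsCycleOn {y : β | y ≠ x} k f)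
    (hfb : IsBoundaryOn Set.univ k f) : IsBoundaryOn {y : β | y ≠ x} k f := by
  obtain ⟨hfs, -⟩ := hf
  obtain ⟨g, hg, hgb⟩ := hfb
  have hfx : ∀ t : Finset β, x ∈ t → f t = 0 := by
    intro t hxt
    by_contra hne
    exact (hfs t hne).2.2 (Finset.mem_coe.2 hxt) rfl
  obtain ⟨w, hws, hwx⟩ := core hL k g hg (fun t ht => by rw [hgb]; exact hfx t ht) hjk
  refine ⟨g + bdryFun w, ?_, ?_⟩
  · intro s hs
    have hbw : SuppOn Set.univ (k + 1) (bdryFun w) := suppOn_bdry hws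
    have hone : s.card = k + 1 ∧ IsChain (· ≤ ·) (↑s : Set β) := by
      by_cases hgs : g s = 0
      · have hne : bdryFun w s ≠ 0 := by
          intro h0
          exact hs (by simp [Pi.add_apply, hgs, h0])
        exact ⟨(hbw s hne).1, (hbw s hne).2.1⟩
      · exact ⟨(hg s hgs).1, (hg s hgs).2.1⟩
    have hnx : x ∉ s := by
      intro hxs
      exact hs (by simp [Pi.add_apply, hwx s hxs hone.2])
    refine ⟨hone.1, hone.2, ?_⟩
    rintro y hy rfl
    exact hnx (Finset.mem_coe.1 hy)
  · have hwch : ∀ s, w s ≠ 0 → IsChain (· ≤ ·) (↑s : Set β) := fun s hs => (hws s hs).2.1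
    rw [bdryFun_add, bdry_bdry hwch, hgb, add_zero]

lemma partA (hL : IsLink x ι) {m : ℕ}
    (hjk : ∀ u : Finset γ → ℚ, IsCycleOn Set.univ m u → IsBoundaryOn Set.univ m u)
    (f : Finset β → ℚ) (hf : IsCycleOn Set.univ (m + 1) f) :
    ∃ f' : Finset β → ℚ, IsCycleOn {y : β | y ≠ x} (m + 1) f' ∧
      IsBoundaryOn Set.univ (m + 1) (f - f') := by
  obtain ⟨hfs, hfz⟩ := hf
  obtain ⟨w, hws, hwx⟩ := core hL m f hfs (fun t _ => by rw [hfz]; rfl) hjk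
  have hwch : ∀ s, w s ≠ 0 → IsChain (· ≤ ·) (↑s : Set β) := fun s hs => (hws s hs).2.1
  refine ⟨f + bdryFun w, ⟨?_, ?_⟩, -w, ?_, ?_⟩
  · intro s hs
    have hbw : SuppOn Set.univ (m + 1) (bdryFun w) := suppOn_bdry hws
    have hone : s.card = m + 1 ∧ IsChain (· ≤ ·) (↑s : Set β) := by
      by_cases hgs : f s = 0
      · have hne : bdryFun w s ≠ 0 := by
          intro h0
          exact hs (by simp [Pi.add_apply, hgs, h0])
        exact ⟨(hbw s hne).1, (hbw s hne).2.1⟩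
      · exact ⟨(hfs s hgs).1, (hfs s hgs).2.1⟩
    have hnx : x ∉ s := by
      intro hxs
      exact hs (by simp [Pi.add_apply, hwx s hxs hone.2])
    refine ⟨hone.1, hone.2, ?_⟩
    rintro y hy rfl
    exact hnx (Finset.mem_coe.1 hy)
  · rw [bdryFun_add, hfz, bdry_bdry hwch, add_zero]
  · intro s hs
    exact hws s (by simpa using hs)
  · rw [bdryFun_neg]
    funext t
    simp only [Pi.sub_apply, Pi.add_apply, Pi.neg_apply]
    ring

lemma partA0 (f : Finset β → ℚ) (hf : IsCycleOn (Set.univ : Set β) 0 f) :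
    ∃ f' : Finset β → ℚ, IsCycleOn {y : β | y ≠ x} 0 f' ∧ IsBoundaryOn Set.univ 0 (f - f') := by
  refine ⟨f, ⟨?_, hf.2⟩, 0, ?_, ?_⟩
  · intro s hs
    obtain ⟨h0, hch, -⟩ := hf.1 s hs
    refine ⟨h0, hch, ?_⟩
    rw [Finset.card_eq_zero.1 h0]
    simp
  · intro s hs
    exact absurd rfl hs
  · rw [sub_self]
    funext t
    rw [bdryFun_eq_sum]
    simp

end Main
section LexLink

variable {α : Type*} [PartialOrder α] (x : α)

def lkι : ({y : α // y < x} ⊕ₗ {y : α // x < y}) → α :=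
  fun j => Sum.elim Subtype.val Subtype.val (ofLex j)

lemma lk_cases (j : {y : α // y < x} ⊕ₗ {y : α // x < y}) :
    (∃ a : {y : α // y < x}, j = toLex (Sum.inl a)) ∨
      (∃ b : {y : α // x < y}, j = toLex (Sum.inr b)) := by
  cases h : ofLex j with
  | inl a => exact Or.inl ⟨a, by rw [← h, toLex_ofLex]⟩
  | inr b => exact Or.inr ⟨b, by rw [← h, toLex_ofLex]⟩

@[simp] lemma lkι_inl (a : {y : α // y < x}) : lkι x (toLex (Sum.inl a)) = a.1 := rfl
@[simp] lemma lkι_inr (b : {y : α // x < y}) : lkι x (toLex (Sum.inr b)) = b.1 := rfl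

lemma isLink_lkι : IsLink x (lkι x) := by
  refine ⟨?_, ?_, ?_⟩
  · intro j j'
    rcases lk_cases x j with ⟨a, rfl⟩ | ⟨b, rfl⟩ <;>
      rcases lk_cases x j' with ⟨a', rfl⟩ | ⟨b', rfl⟩
    · rw [lkι_inl, lkι_inl, Sum.Lex.inl_le_inl_iff, Subtype.coe_le_coe]
    · simp only [lkι_inl, lkι_inr]
      exact iff_of_true (le_of_lt (a.2.trans b'.2)) (Sum.Lex.inl_le_inr _ _)
    · simp only [lkι_inl, lkι_inr]
      refine iff_of_false (fun h => ?_) Sum.Lex.not_inr_le_inl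
      exact absurd ((b.2.trans_le h).trans a'.2) (lt_irrefl x)
    · rw [lkι_inr, lkι_inr, Sum.Lex.inr_le_inr_iff, Subtype.coe_le_coe]
  · intro j
    rcases lk_cases x j with ⟨a, rfl⟩ | ⟨b, rfl⟩
    · exact Or.inl a.2
    · exact Or.inr b.2
  · rintro y (h | h)
    · exact ⟨toLex (Sum.inl ⟨y, h⟩), rfl⟩
    · exact ⟨toLex (Sum.inr ⟨y, h⟩), rfl⟩

end LexLink

/-- if the join `X_{<x} * X_{>x}` has vanishing reduced homology in degrees
`-1 ≤ m ≤ n - 1` (sizes `0 ≤ k ≤ n`), then the inclusion `X \ {x} ↪ X` induces an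
isomorphism on reduced homology in degrees `≤ n - 1` (sizes `≤ n`) and a surjection in
degree `n` (size `n + 1`). -/
theorem statement19 {α : Type*} [PartialOrder α] [Finite α] (x : α) (n : ℕ)
    (hjoin : ∀ k ≤ n, ∀ f : Finset ({y : α // y < x} ⊕ₗ {y : α // x < y}) → ℚ,
      IsCycleOn Set.univ k f → IsBoundaryOn Set.univ k f) :
    (∀ k ≤ n,
      (∀ f : Finset α → ℚ, IsCycleOn {y : α | y ≠ x} k f →
        IsBoundaryOn Set.univ k f → IsBoundaryOn {y : α | y ≠ x} k f) ∧
      (∀ f : Finset α → ℚ, IsCycleOn Set.univ k f →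
        ∃ f' : Finset α → ℚ, IsCycleOn {y : α | y ≠ x} k f' ∧
          IsBoundaryOn Set.univ k (f - f'))) ∧
    (∀ f : Finset α → ℚ, IsCycleOn Set.univ (n + 1) f →
      ∃ f' : Finset α → ℚ, IsCycleOn {y : α | y ≠ x} (n + 1) f' ∧
        IsBoundaryOn Set.univ (n + 1) (f - f')) := by
  haveI := Fintype.ofFinite α
  haveI : Fintype ({y : α // y < x} ⊕ₗ {y : α // x < y}) :=
    Fintype.ofEquiv _ (toLex : _ ≃ Lex ({y : α // y < x} ⊕ {y : α // x < y}))
  have hL := isLink_lkι x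
  constructor
  · intro k hk
    constructor
    · exact fun f hf hfb => partB hL (hjoin k hk) f hf hfb
    · intro f hf
      match k, hk with
      | 0, _ => exact partA0 f hf
      | (m + 1), hk => exact partA hL (hjoin m (by omega)) f hf
  · exact fun f hf => partA hL (hjoin n le_rfl) f hf


end QF
end
end
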